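/- arXiv:2401.00418 — 3 statements merged into one kernel-verified Lean document; each statement's English description precedes it below -/
import Mathlib

section
/- For every prime power q, every integer k ≥ 2, and every integer r ≥ 1, there exists a constant d₀ (depending on q, k, r) such that for all integers d ≥ d₀ one has n_q(k,d,r) = g_q(k,d); that is, the smallest length of a linear [n,k,d]_q-code with locality r equals the Griesmer bound. -/
open scoped Classical

/-- The Hamming weight of a vector: the number of nonzero coordinates. -/
noncomputable def hamWt {F : Type} [Field F] {n : ℕ} (c : Fin n → F) : ℕ :=
  (Finset.univ.filter fun i => c i ≠ 0).card

/-- `C` is a linear `[n,k,d]` code over `F`: a `k`-dimensional subspace of `F^n`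
in which every nonzero codeword has Hamming weight at least `d`. -/
def IsCode {F : Type} [Field F] {n : ℕ} (k d : ℕ) (C : Submodule F (Fin n → F)) : Prop :=
  Module.finrank F ↥C = k ∧ ∀ c ∈ C, c ≠ 0 → d ≤ hamWt c

/-- `C ⊆ F^n` has locality `r`: every coordinate `i` has a recovery set `S` of at most `r`
other coordinates such that any two codewords agreeing on `S` agree at `i`. -/
def HasLocality {F : Type} [Field F] {n : ℕ} (C : Submodule F (Fin n → F)) (r : ℕ) : Prop :=
  ∀ i : Fin n, ∃ S : Finset (Fin n), i ∉ S ∧ S.card ≤ r ∧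
    ∀ c ∈ C, ∀ c' ∈ C, (∀ j ∈ S, c j = c' j) → c i = c' i

/-- There exists a linear `[n,k,d]_q` code (over some field with `q` elements). -/
def CodeExists (q n k d : ℕ) : Prop :=
  ∃ (F : Type) (_ : Field F), Nat.card F = q ∧
    ∃ C : Submodule F (Fin n → F), IsCode k d C

/-- There exists a linear `[n,k,d]_q` code with locality `r`. -/
def LRCExists (q n k d r : ℕ) : Prop :=
  ∃ (F : Type) (_ : Field F), Nat.card F = q ∧
    ∃ C : Submodule F (Fin n → F), IsCode k d C ∧ HasLocality C r

/-- `n_q(k,d)`: the smallest length of a linear `[n,k,d]_q` code. -/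
noncomputable def nCode (q k d : ℕ) : ℕ := sInf {n | CodeExists q n k d}

/-- `n_q(k,d,r)`: the smallest length of a linear `[n,k,d]_q` code with locality `r`. -/
noncomputable def nLRC (q k d r : ℕ) : ℕ := sInf {n | LRCExists q n k d r}

/-- There exists an `[n,k]_q` code with locality `r` (no condition on minimum distance). -/
def LRCExistsNoDist (q n k r : ℕ) : Prop :=
  ∃ (F : Type) (_ : Field F), Nat.card F = q ∧
    ∃ C : Submodule F (Fin n → F), Module.finrank F ↥C = k ∧ HasLocality C r

/-- `n'_q(k,r)`: the smallest length of an `[n,k]_q` code with locality `r`. -/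
noncomputable def nLRCNoDist (q k r : ℕ) : ℕ := sInf {n | LRCExistsNoDist q n k r}

/-- The dual code of `C`. -/
def dualCode {F : Type} [Field F] {n : ℕ} (C : Submodule F (Fin n → F)) : Set (Fin n → F) :=
  {x | ∀ c ∈ C, ∑ j, x j * c j = 0}

/-- `C` is projective: non-degenerate and no two coordinates are proportional. -/
def IsProjective {F : Type} [Field F] {n : ℕ} (C : Submodule F (Fin n → F)) : Prop :=
  (∀ i : Fin n, ∃ c ∈ C, c i ≠ 0) ∧
    (∀ i j : Fin n, i ≠ j → ∀ lam : F, lam ≠ 0 → ∃ c ∈ C, c i ≠ lam * c j)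

/-- The Griesmer bound `g_q(k,d) = ∑_{i=0}^{k-1} ⌈d/q^i⌉`. -/
noncomputable def griesmer (q k d : ℕ) : ℕ :=
  ∑ i ∈ Finset.range k, ⌈(d : ℚ) / (q : ℚ) ^ i⌉₊

section Arith
open Finset

lemma natCeil_div_le_iff {a m x : ℕ} (hm : 0 < m) :
    ⌈(a : ℚ) / (m : ℚ)⌉₊ ≤ x ↔ a ≤ m * x := by
  rw [Nat.ceil_le, div_le_iff₀ (by exact_mod_cast hm)]
  rw [show ((x : ℚ) * m) = ((m * x : ℕ) : ℚ) by push_cast; ring]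
  exact Nat.cast_le

lemma natCeil_pow_le_iff {q a i x : ℕ} (hq : 0 < q) :
    ⌈(a : ℚ) / (q : ℚ) ^ i⌉₊ ≤ x ↔ a ≤ q ^ i * x := by
  rw [show ((q : ℚ) ^ i) = ((q ^ i : ℕ) : ℚ) by push_cast; ring]
  exact natCeil_div_le_iff (pow_pos hq i)

lemma natCeil_div_eq {a m X : ℕ} (hm : 0 < m) (h1 : a ≤ m * X) (h2 : m * X < a + m) :
    ⌈(a : ℚ) / (m : ℚ)⌉₊ = X := by
  refine le_antisymm ((natCeil_div_le_iff hm).2 h1) ?_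
  by_contra h
  push_neg at h
  have hX : 1 ≤ X := by omega
  have h3 : a ≤ m * (X - 1) := (natCeil_div_le_iff hm).1 (by omega)
  have h4 : m * (X - 1) + m = m * X := by
    have : m * (X - 1) = m * X - m := by rw [Nat.mul_sub, Nat.mul_one]
    have h5 : m * 1 ≤ m * X := Nat.mul_le_mul_left m hX
    omega
  omega

lemma ceil_div_bounds {q w : ℕ} (hq : 0 < q) :
    w ≤ q * ⌈(w : ℚ) / (q : ℚ)⌉₊ ∧ q * ⌈(w : ℚ) / (q : ℚ)⌉₊ < w + q := by
  set c := ⌈(w : ℚ) / (q : ℚ)⌉₊ with hc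
  have h1 : w ≤ q * c := (natCeil_div_le_iff hq).1 le_rfl
  refine ⟨h1, ?_⟩
  by_contra h
  push_neg at h
  have hc1 : 1 ≤ c := by
    rcases Nat.eq_zero_or_pos c with h0 | h0
    · rw [h0, Nat.mul_zero] at h; omega
    · omega
  have h4 : q * (c - 1) + q = q * c := by
    have : q * (c - 1) = q * c - q := by rw [Nat.mul_sub, Nat.mul_one]
    have h5 : q * 1 ≤ q * c := Nat.mul_le_mul_left q hc1
    omega
  have h3 : c ≤ c - 1 := (natCeil_div_le_iff hq).2 (by omega)
  omega

lemma ceil_div_le_self {q w : ℕ} (hq : 0 < q) : ⌈(w : ℚ) / (q : ℚ)⌉₊ ≤ w :=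
  (natCeil_div_le_iff hq).2 (by nlinarith)

lemma griesmer_mono {q k d d' : ℕ} (h : d ≤ d') :
    griesmer q k d ≤ griesmer q k d' := by
  unfold griesmer
  refine Finset.sum_le_sum fun i _ => ?_
  refine Nat.ceil_le_ceil ?_
  rcases eq_or_ne q 0 with rfl | hq
  · rcases Nat.eq_zero_or_pos i with rfl | hi
    · simp only [pow_zero, div_one]; exact_mod_cast h
    · simp [zero_pow (by omega : i ≠ 0)]
  · have hpos : (0:ℚ) < (q:ℚ) ^ i := by
      have : 0 < q := Nat.pos_of_ne_zero hq
      positivity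
    have h' : (d:ℚ) ≤ (d':ℚ) := by exact_mod_cast h
    gcongr

lemma griesmer_succ {q k d : ℕ} (hq : 0 < q) :
    griesmer q (k + 1) d = d + griesmer q k ⌈(d : ℚ) / (q : ℚ)⌉₊ := by
  unfold griesmer
  rw [Finset.sum_range_succ']
  have h0 : ⌈(d : ℚ) / (q : ℚ) ^ 0⌉₊ = d := by
    rw [pow_zero, div_one, Nat.ceil_natCast]
  rw [h0, add_comm]
  congr 1
  refine Finset.sum_congr rfl fun i _ => ?_
  set c := ⌈(d : ℚ) / (q : ℚ)⌉₊ with hcdef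
  have key : ∀ x : ℕ, ⌈(d : ℚ) / (q : ℚ) ^ (i + 1)⌉₊ ≤ x ↔ ⌈(c : ℚ) / (q : ℚ) ^ i⌉₊ ≤ x := by
    intro x
    rw [natCeil_pow_le_iff hq, natCeil_pow_le_iff hq]
    have hcx : c ≤ q ^ i * x ↔ d ≤ q * (q ^ i * x) := natCeil_div_le_iff hq
    rw [hcx, show q * (q ^ i * x) = q ^ (i+1) * x by ring]
  exact le_antisymm ((key _).2 le_rfl) ((key _).1 le_rfl)

lemma natCeil_pow_eq {q a i X : ℕ} (hq : 0 < q) (h1 : a ≤ q ^ i * X) (h2 : q ^ i * X < a + q ^ i) :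
    ⌈(a : ℚ) / (q : ℚ) ^ i⌉₊ = X := by
  rw [show ((q : ℚ) ^ i) = ((q ^ i : ℕ) : ℚ) by push_cast; ring]
  exact natCeil_div_eq (pow_pos hq i) h1 h2

/-- base-q digit expansion -/
lemma digit_sum (q : ℕ) : ∀ (m x : ℕ), ∑ j ∈ Finset.range m, (x / q ^ j % q) * q ^ j = x % q ^ m := by
  intro m
  induction m with
  | zero => intro x; simp [Nat.mod_one]
  | succ m ih =>
    intro x
    rw [Finset.sum_range_succ, ih x, Nat.mod_pow_succ]
    ring

end Arith

section Lower
open Finset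

lemma hamWt_le {F : Type} [Field F] {n : ℕ} (c : Fin n → F) : hamWt c ≤ n := by
  unfold hamWt
  calc (Finset.univ.filter fun i => c i ≠ 0).card ≤ (Finset.univ : Finset (Fin n)).card :=
        Finset.card_filter_le _ _
    _ = n := by simp

lemma hamWt_pos {F : Type} [Field F] {n : ℕ} {c : Fin n → F} (hc : c ≠ 0) : 1 ≤ hamWt c := by
  have : ∃ i, c i ≠ 0 := by
    by_contra h; push_neg at h; exact hc (funext h)
  obtain ⟨i, hi⟩ := this
  have : i ∈ Finset.univ.filter fun j => c j ≠ 0 := by simp [hi]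
  unfold hamWt
  exact Finset.card_pos.2 ⟨i, this⟩

lemma griesmer_le_of_code {q : ℕ} (hq : 2 ≤ q) :
    ∀ (k : ℕ) {F : Type} [Field F] [Fintype F], Fintype.card F = q →
      ∀ (n d : ℕ) (C : Submodule F (Fin n → F)),
      Module.finrank F ↥C = k → (∀ c ∈ C, c ≠ 0 → d ≤ hamWt c) → griesmer q k d ≤ n := by
  intro k
  induction k with
  | zero => intro F _ _ _ n d C _ _; simp [griesmer]
  | succ k ih =>
    intro F _ _ hF n d C hrank hdist
    have hq0 : 0 < q := by omega
    -- C is nontrivial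
    have hC_ne : ∃ c ∈ C, c ≠ 0 := by
      by_contra h
      push_neg at h
      have hbot : C = ⊥ := by
        rw [Submodule.eq_bot_iff]; exact h
      rw [hbot, finrank_bot] at hrank; omega
    -- minimal weight codeword
    set W : Set ℕ := {w | ∃ c ∈ C, c ≠ 0 ∧ hamWt c = w} with hW
    have hWne : W.Nonempty := by
      obtain ⟨c, hc, hc0⟩ := hC_ne; exact ⟨hamWt c, c, hc, hc0, rfl⟩
    obtain ⟨c0, hc0C, hc00, hc0w⟩ := Nat.sInf_mem hWne
    set w := sInf W with hwdef
    have hmin : ∀ c ∈ C, c ≠ 0 → w ≤ hamWt c := fun c hc h0 => Nat.sInf_le ⟨c, hc, h0, rfl⟩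
    have hdw : d ≤ w := hc0w ▸ hdist c0 hc0C hc00
    have hw1 : 1 ≤ w := hc0w ▸ hamWt_pos hc00
    -- support of c0 and its complement
    set S : Finset (Fin n) := Finset.univ.filter (fun i => c0 i ≠ 0) with hS
    set Sc : Finset (Fin n) := Finset.univ.filter (fun i => c0 i = 0) with hSc
    have hwS : S.card = w := hc0w
    have hcardsum : S.card + Sc.card = n := by
      have h := Finset.card_filter_add_card_filter_not
        (s := (Finset.univ : Finset (Fin n))) (fun i => c0 i ≠ 0)
      rw [Finset.card_univ, Fintype.card_fin] at h
      have h2 : (Finset.univ.filter fun a => ¬ c0 a ≠ 0) = (Finset.univ.filter fun i => c0 i = 0) := by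
        apply Finset.filter_congr
        intro i _
        simp [not_not]
      rw [hS, hSc, ← h2]
      exact h
    set m := Sc.card with hm
    set g : Fin m → Fin n := fun j => ((Sc.equivFin.symm j : ↥Sc) : Fin n) with hg
    have hgmem : ∀ j, g j ∈ Sc := fun j => (Sc.equivFin.symm j).2
    have hgsurj : ∀ i ∈ Sc, ∃ j, g j = i := fun i hi =>
      ⟨Sc.equivFin ⟨i, hi⟩, by simp [hg]⟩
    set π : (Fin n → F) →ₗ[F] (Fin m → F) := LinearMap.funLeft F F g with hπ
    have hπ_apply : ∀ (y : Fin n → F) (j : Fin m), π y j = y (g j) := fun y j => rfl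
    have hπ0 : ∀ y : Fin n → F, (π y = 0 ↔ ∀ i, c0 i = 0 → y i = 0) := by
      intro y
      constructor
      · intro h i hi
        obtain ⟨j, hj⟩ := hgsurj i (by simp [hSc, hi])
        have := congrFun h j
        rw [hπ_apply, hj] at this
        exact this
      · intro h
        funext j
        have hmem := hgmem j
        rw [hSc, Finset.mem_filter] at hmem
        show y (g j) = 0
        exact h _ hmem.2
    have hπc0 : π c0 = 0 := (hπ0 c0).2 (fun i hi => hi)
    -- kernel of restriction is spanned by c0
    have hker : ∀ y ∈ C, π y = 0 → ∃ a : F, y = a • c0 := by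
      intro y hyC hy0
      have hyout : ∀ i, c0 i = 0 → y i = 0 := (hπ0 y).1 hy0
      rcases eq_or_ne y 0 with rfl | hyne
      · exact ⟨0, by simp⟩
      · have hex : ∃ i, y i ≠ 0 := by
          by_contra hcon; push_neg at hcon; exact hyne (funext hcon)
        obtain ⟨i0, hi0⟩ := hex
        have hc0i : c0 i0 ≠ 0 := fun h => hi0 (hyout _ h)
        set a := y i0 * (c0 i0)⁻¹ with ha
        refine ⟨a, ?_⟩
        by_contra hne
        set z := y - a • c0 with hz
        have hzC : z ∈ C := Submodule.sub_mem C hyC (Submodule.smul_mem C a hc0C)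
        have hzne : z ≠ 0 := sub_ne_zero.2 hne
        have hzi0 : z i0 = 0 := by
          show y i0 - a * c0 i0 = 0
          rw [ha, mul_assoc, inv_mul_cancel₀ hc0i, mul_one, sub_self]
        have hzout : ∀ i, c0 i = 0 → z i = 0 := fun i hi => by
          show y i - a * c0 i = 0
          rw [hyout i hi, hi, mul_zero, sub_zero]
        have hwz : w ≤ hamWt z := hmin z hzC hzne
        have hsub : (Finset.univ.filter fun i => z i ≠ 0) ⊆ S.erase i0 := by
          intro i hi
          rw [Finset.mem_filter] at hi
          rw [Finset.mem_erase]
          constructor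
          · rintro rfl; exact hi.2 hzi0
          · rw [hS, Finset.mem_filter]
            exact ⟨Finset.mem_univ _, fun h => hi.2 (hzout i h)⟩
        have hle : hamWt z ≤ S.card - 1 := by
          have h1 : hamWt z ≤ (S.erase i0).card := Finset.card_le_card hsub
          have h2 : (S.erase i0).card = S.card - 1 :=
            Finset.card_erase_of_mem (by rw [hS, Finset.mem_filter]; exact ⟨Finset.mem_univ _, hc0i⟩)
          omega
        omega
    -- rank of the residual code
    set φ : ↥C →ₗ[F] (Fin m → F) := π.comp C.subtype with hφ
    have hrange : LinearMap.range φ = C.map π := by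
      rw [hφ, LinearMap.range_comp, Submodule.range_subtype]
    have hgen0 : (⟨c0, hc0C⟩ : ↥C) ≠ 0 := by
      intro h
      exact hc00 (by simpa [Submodule.mk_eq_zero] using h)
    have hkerφ : LinearMap.ker φ = Submodule.span F {(⟨c0, hc0C⟩ : ↥C)} := by
      apply le_antisymm
      · intro x hx
        have hx' : π (x : Fin n → F) = 0 := hx
        obtain ⟨a, hay⟩ := hker x x.2 hx'
        rw [Submodule.mem_span_singleton]
        exact ⟨a, by apply Subtype.ext; simp [hay]⟩
      · rw [Submodule.span_le]
        intro x hx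
        rw [Set.mem_singleton_iff] at hx
        subst hx
        show φ _ = 0
        show π c0 = 0
        exact hπc0
    have hrn := LinearMap.finrank_range_add_finrank_ker φ
    rw [hrange, hkerφ, finrank_span_singleton hgen0, hrank] at hrn
    have hrank' : Module.finrank F ↥(C.map π) = k := by omega
    -- residual distance
    set cw := ⌈(w : ℚ) / (q : ℚ)⌉₊ with hcw
    obtain ⟨hb1, hb2⟩ := ceil_div_bounds (q := q) (w := w) hq0
    rw [← hcw] at hb1 hb2
    have hcww : cw ≤ w := ceil_div_le_self hq0
    have hdist' : ∀ c' ∈ C.map π, c' ≠ 0 → cw ≤ hamWt c' := by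
      intro c' hc' hc'0
      obtain ⟨y, hyC, hyπ⟩ := Submodule.mem_map.1 hc'
      have hwt : hamWt c' = (Sc.filter fun i => y i ≠ 0).card := by
        rw [← hyπ]
        unfold hamWt
        apply Finset.card_bij (fun j _ => g j)
        · intro j hj
          rw [Finset.mem_filter] at hj
          rw [Finset.mem_filter]
          exact ⟨hgmem j, by rw [← hπ_apply y j]; exact hj.2⟩
        · intro a ha b hb hab
          apply Sc.equivFin.symm.injective
          exact Subtype.ext hab
        · intro i hi
          rw [Finset.mem_filter] at hi
          obtain ⟨j, hj⟩ := hgsurj i hi.1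
          refine ⟨j, ?_, hj⟩
          rw [Finset.mem_filter]
          refine ⟨Finset.mem_univ _, ?_⟩
          rw [hπ_apply, hj]
          exact hi.2
      set t : F → ℕ := fun α => (S.filter fun i => y i ≠ α * c0 i).card with ht
      have hsum : ∑ α : F, t α = w * (q - 1) := by
        have expand : ∀ α : F, t α = ∑ i ∈ S, if y i ≠ α * c0 i then 1 else 0 := fun α =>
          Finset.card_filter _ _
        calc ∑ α : F, t α = ∑ α : F, ∑ i ∈ S, if y i ≠ α * c0 i then 1 else 0 :=
              Finset.sum_congr rfl fun α _ => expand α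
          _ = ∑ i ∈ S, ∑ α : F, if y i ≠ α * c0 i then 1 else 0 := Finset.sum_comm
          _ = ∑ i ∈ S, (q - 1) := by
              refine Finset.sum_congr rfl fun i hi => ?_
              rw [hS, Finset.mem_filter] at hi
              have hci : c0 i ≠ 0 := hi.2
              have hsingle : (Finset.univ.filter fun α : F => ¬ y i ≠ α * c0 i)
                  = {y i * (c0 i)⁻¹} := by
                ext α
                rw [Finset.mem_filter, Finset.mem_singleton, not_not]
                constructor
                · intro h
                  rw [h.2, mul_assoc, mul_inv_cancel₀ hci, mul_one]
                · rintro rfl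
                  refine ⟨Finset.mem_univ _, ?_⟩
                  field_simp
              have hcnt := Finset.card_filter_add_card_filter_not
                (s := (Finset.univ : Finset F)) (fun α => y i ≠ α * c0 i)
              rw [hsingle] at hcnt
              rw [Finset.card_singleton, Finset.card_univ, hF] at hcnt
              rw [← Finset.card_filter]
              omega
          _ = w * (q - 1) := by rw [Finset.sum_const, hwS, smul_eq_mul]
      have hex : ∃ α : F, t α ≤ w - cw := by
        by_contra hcon
        push_neg at hcon
        have hge : (Finset.univ : Finset F).card • (w - cw + 1) ≤ ∑ α : F, t α :=
          Finset.card_nsmul_le_sum _ _ _ (fun α _ => by have := hcon α; omega)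
        rw [Finset.card_univ, hF, smul_eq_mul, hsum] at hge
        have e1 : q * (w - cw + 1) = q * w - q * cw + q := by
          rw [Nat.mul_add, Nat.mul_sub, Nat.mul_one]
        have e2 : w * (q - 1) = w * q - w := by rw [Nat.mul_sub, Nat.mul_one]
        have e3 : q * w = w * q := Nat.mul_comm _ _
        have e4 : q * cw ≤ q * w := Nat.mul_le_mul_left q hcww
        omega
      obtain ⟨α0, hα0⟩ := hex
      set z := y - α0 • c0 with hz
      have hzC : z ∈ C := Submodule.sub_mem C hyC (Submodule.smul_mem C α0 hc0C)
      have hzπ : π z = c' := by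
        rw [hz, map_sub, map_smul, hπc0, smul_zero, sub_zero, hyπ]
      have hzne : z ≠ 0 := fun h => hc'0 (by rw [← hzπ, h, map_zero])
      have hwz : w ≤ hamWt z := hmin z hzC hzne
      have hzapp : ∀ i, z i = y i - α0 * c0 i := fun i => rfl
      have hsplit : hamWt z ≤ t α0 + (Sc.filter fun i => z i ≠ 0).card := by
        unfold hamWt
        have hcnt := Finset.card_filter_add_card_filter_not
          (s := Finset.univ.filter fun i => z i ≠ 0) (fun i => c0 i ≠ 0)
        have e5 : ((Finset.univ.filter fun i => z i ≠ 0).filter fun i => c0 i ≠ 0).card ≤ t α0 := by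
          apply Finset.card_le_card
          intro i hi
          rw [Finset.mem_filter, Finset.mem_filter] at hi
          rw [Finset.mem_filter]
          refine ⟨by rw [hS, Finset.mem_filter]; exact ⟨Finset.mem_univ _, hi.2⟩, ?_⟩
          intro hcon
          apply hi.1.2
          rw [hzapp, hcon, sub_self]
        have e6 : ((Finset.univ.filter fun i => z i ≠ 0).filter fun i => ¬ c0 i ≠ 0)
            ⊆ Sc.filter fun i => z i ≠ 0 := by
          intro i hi
          rw [Finset.mem_filter, Finset.mem_filter, not_not] at hi
          rw [Finset.mem_filter, hSc, Finset.mem_filter]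
          exact ⟨⟨Finset.mem_univ _, hi.2⟩, hi.1.2⟩
        have e7 := Finset.card_le_card e6
        omega
      have hScz : (Sc.filter fun i => z i ≠ 0) = (Sc.filter fun i => y i ≠ 0) := by
        apply Finset.filter_congr
        intro i hi
        rw [hSc, Finset.mem_filter] at hi
        rw [hzapp, hi.2, mul_zero, sub_zero]
      rw [hScz, ← hwt] at hsplit
      omega
    -- apply induction hypothesis
    have hIH := ih hF m cw (C.map π) hrank' hdist'
    have hwn : w ≤ n := by
      rw [← hc0w]; exact hamWt_le c0
    calc griesmer q (k+1) d ≤ griesmer q (k+1) w := griesmer_mono hdw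
      _ = w + griesmer q k cw := griesmer_succ hq0
      _ ≤ n := by omega

end Lower

section Counts
open Finset

variable {F : Type} [Field F] [Fintype F] {k : ℕ}

lemma filter_card_congr {α : Type} {p q : α → Prop} {i1 : DecidablePred p} {i2 : DecidablePred q}
    {s : Finset α} (h : ∀ a ∈ s, p a ↔ q a) :
    (@Finset.filter α p i1 s).card = (@Finset.filter α q i2 s).card := by
  congr 1
  ext a
  rw [Finset.mem_filter, Finset.mem_filter]
  exact ⟨fun hp => ⟨hp.1, (h a hp.1).1 hp.2⟩, fun hq => ⟨hq.1, (h a hq.1).2 hq.2⟩⟩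

/-- dot product -/
def dotp (v x : Fin k → F) : F := ∑ i, v i * x i

lemma dotp_add_left (v w x : Fin k → F) : dotp (v + w) x = dotp v x + dotp w x := by
  simp [dotp, add_mul, Finset.sum_add_distrib]

lemma dotp_smul_left (c : F) (v x : Fin k → F) : dotp (c • v) x = c * dotp v x := by
  simp [dotp, Finset.mul_sum, mul_assoc]

lemma dotp_add_right (v x y : Fin k → F) : dotp v (x + y) = dotp v x + dotp v y := by
  simp [dotp, mul_add, Finset.sum_add_distrib]

lemma dotp_smul_right (c : F) (v x : Fin k → F) : dotp v (c • x) = c * dotp v x := by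
  unfold dotp
  rw [Finset.mul_sum]
  exact Finset.sum_congr rfl fun i _ => by show v i * (c * x i) = _; ring

lemma dotp_zero_left (x : Fin k → F) : dotp (0 : Fin k → F) x = 0 := by simp [dotp]

lemma dotp_single (i0 : Fin k) (x : Fin k → F) : dotp (Pi.single i0 1) x = x i0 := by
  unfold dotp
  rw [Finset.sum_eq_single i0]
  · simp
  · intro b _ hb
    rw [Pi.single_eq_of_ne hb, zero_mul]
  · intro h
    exact absurd (Finset.mem_univ i0) h

/-- v is the normalized representative of its projective point -/
def isRep (v : Fin k → F) : Prop := ∃ i : Fin k, v i = 1 ∧ ∀ t : Fin k, t < i → v t = 0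

/-- all coordinates below c vanish -/
def zb (c : ℕ) (v : Fin k → F) : Prop := ∀ t : Fin k, (t : ℕ) < c → v t = 0

lemma isRep_ne_zero {v : Fin k → F} (h : isRep v) : v ≠ 0 := by
  obtain ⟨i, h1, _⟩ := h
  intro h0
  rw [h0] at h1
  simpa using h1

lemma isRep_single (i0 : Fin k) : isRep (Pi.single i0 (1 : F)) := by
  refine ⟨i0, by simp, fun t ht => ?_⟩
  exact Pi.single_eq_of_ne (ne_of_lt ht) 1

noncomputable def fni (v : Fin k → F) (h : v ≠ 0) : Fin k :=
  (Finset.univ.filter fun i => v i ≠ 0).min' (by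
    have hex : ∃ i, v i ≠ 0 := by
      by_contra hc; push_neg at hc; exact h (funext hc)
    obtain ⟨i, hi⟩ := hex
    exact ⟨i, by simp [hi]⟩)

lemma fni_ne (v : Fin k → F) (h : v ≠ 0) : v (fni v h) ≠ 0 := by
  have := Finset.min'_mem (Finset.univ.filter fun i => v i ≠ 0)
    (by
      have hex : ∃ i, v i ≠ 0 := by
        by_contra hc; push_neg at hc; exact h (funext hc)
      obtain ⟨i, hi⟩ := hex
      exact ⟨i, by simp [hi]⟩)
  simpa [fni] using this

lemma fni_min (v : Fin k → F) (h : v ≠ 0) : ∀ t, t < fni v h → v t = 0 := by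
  intro t ht
  by_contra hc
  have hle : fni v h ≤ t := Finset.min'_le _ _ (by simp [hc])
  exact absurd ht (not_lt.2 hle)

lemma fni_rep {v : Fin k → F} (hr : isRep v) (h : v ≠ 0) : v (fni v h) = 1 := by
  obtain ⟨i, h1, h0⟩ := hr
  have hle : fni v h ≤ i := Finset.min'_le _ _ (by simp [h1])
  have hnl : ¬ fni v h < i := fun hlt => fni_ne v h (h0 _ hlt)
  have heq : fni v h = i := le_antisymm hle (not_lt.1 hnl)
  rw [heq, h1]

lemma fni_smul {v : Fin k → F} (h : v ≠ 0) {c : F} (hc : c ≠ 0)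
    (hcv : c • v ≠ 0) : fni (c • v) hcv = fni v h := by
  unfold fni
  congr 1
  ext i
  simp only [Finset.mem_filter, Finset.mem_univ, true_and, Pi.smul_apply, smul_eq_mul]
  constructor
  · intro hi h0; exact hi (by rw [h0, mul_zero])
  · intro hi h0; exact hi ((mul_eq_zero.1 h0).resolve_left hc)

noncomputable def nrm (v : Fin k → F) : Fin k → F :=
  if h : v ≠ 0 then (v (fni v h))⁻¹ • v else 0

noncomputable def lead (v : Fin k → F) : F :=
  if h : v ≠ 0 then v (fni v h) else 0

lemma lead_ne {v : Fin k → F} (h : v ≠ 0) : lead v ≠ 0 := by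
  rw [lead, dif_pos h]; exact fni_ne v h

lemma nrm_eq {v : Fin k → F} (h : v ≠ 0) : nrm v = (lead v)⁻¹ • v := by
  rw [nrm, lead, dif_pos h, dif_pos h]

lemma lead_smul_nrm {v : Fin k → F} (h : v ≠ 0) : lead v • nrm v = v := by
  rw [nrm_eq h]
  exact smul_inv_smul₀ (lead_ne h) v

lemma isRep_nrm {v : Fin k → F} (h : v ≠ 0) : isRep (nrm v) := by
  rw [nrm_eq h]
  refine ⟨fni v h, ?_, fun t ht => ?_⟩
  · show (lead v)⁻¹ * v (fni v h) = 1
    rw [lead, dif_pos h]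
    exact inv_mul_cancel₀ (fni_ne v h)
  · show (lead v)⁻¹ * v t = 0
    rw [fni_min v h t ht, mul_zero]

lemma nrm_smul_rep {w : Fin k → F} (hw : isRep w) {c : F} (hc : c ≠ 0) :
    nrm (c • w) = w := by
  have hw0 : w ≠ 0 := isRep_ne_zero hw
  have hcw0 : c • w ≠ 0 := smul_ne_zero hc hw0
  rw [nrm, dif_pos hcw0]
  rw [fni_smul hw0 hc hcw0]
  have hval : (c • w) (fni w hw0) = c := by
    show c * w (fni w hw0) = c
    rw [fni_rep hw hw0, mul_one]
  rw [hval]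
  exact inv_smul_smul₀ hc w

lemma lead_smul_rep {w : Fin k → F} (hw : isRep w) {c : F} (hc : c ≠ 0) :
    lead (c • w) = c := by
  have hw0 : w ≠ 0 := isRep_ne_zero hw
  have hcw0 : c • w ≠ 0 := smul_ne_zero hc hw0
  rw [lead, dif_pos hcw0, fni_smul hw0 hc hcw0]
  show c * w (fni w hw0) = c
  rw [fni_rep hw hw0, mul_one]

lemma nrm_rep {w : Fin k → F} (hw : isRep w) : nrm w = w := by
  have := nrm_smul_rep hw (one_ne_zero (α := F))
  rwa [one_smul] at this

/-- Key fiber-counting: scale-invariant sets are (q-1) times their representative sets. -/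
lemma scale_count (q : ℕ) (hF : Fintype.card F = q) (Q : (Fin k → F) → Prop)
    (hQ0 : ¬ Q 0) (hsc : ∀ c : F, c ≠ 0 → ∀ v, Q (c • v) ↔ Q v) :
    (q - 1) * (Finset.univ.filter fun v => isRep v ∧ Q v).card
      = (Finset.univ.filter Q).card := by
  set A := Finset.univ.filter Q with hA
  set B := Finset.univ.filter (fun v => isRep v ∧ Q v) with hB
  have hne : ∀ v ∈ A, v ≠ 0 := by
    intro v hv h0
    rw [hA, Finset.mem_filter] at hv
    rw [h0] at hv
    exact hQ0 hv.2
  have hmap : ∀ v ∈ A, nrm v ∈ B := by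
    intro v hv
    have hv0 := hne v hv
    rw [hA, Finset.mem_filter] at hv
    rw [hB, Finset.mem_filter]
    refine ⟨Finset.mem_univ _, isRep_nrm hv0, ?_⟩
    rw [nrm_eq hv0]
    exact (hsc _ (inv_ne_zero (lead_ne hv0)) v).2 hv.2
  have hcard := Finset.card_eq_sum_card_fiberwise hmap
  have hfib : ∀ w ∈ B, (A.filter fun v => nrm v = w).card = q - 1 := by
    intro w hw
    rw [hB, Finset.mem_filter] at hw
    obtain ⟨-, hrw, hQw⟩ := hw
    have hcE : (Finset.univ.erase (0 : F)).card = q - 1 := by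
      rw [Finset.card_erase_of_mem (Finset.mem_univ _), Finset.card_univ, hF]
    rw [← hcE]
    refine Finset.card_bij' (fun v _ => lead v) (fun c _ => c • w) ?_ ?_ ?_ ?_
    · intro v hv
      rw [Finset.mem_filter] at hv
      have hv0 := hne v hv.1
      exact Finset.mem_erase.2 ⟨lead_ne hv0, Finset.mem_univ _⟩
    · intro c hc
      rw [Finset.mem_erase] at hc
      rw [Finset.mem_filter]
      refine ⟨?_, nrm_smul_rep hrw hc.1⟩
      rw [hA, Finset.mem_filter]
      exact ⟨Finset.mem_univ _, (hsc c hc.1 w).2 hQw⟩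
    · intro v hv
      rw [Finset.mem_filter] at hv
      have hv0 := hne v hv.1
      show lead v • w = v
      rw [← hv.2]
      exact lead_smul_nrm hv0
    · intro c hc
      rw [Finset.mem_erase] at hc
      exact lead_smul_rep hrw hc.1
  rw [hcard, Finset.sum_congr rfl hfib, Finset.sum_const, smul_eq_mul, Nat.mul_comm]

lemma zb_card (q : ℕ) (hF : Fintype.card F = q) {c : ℕ} (hc : c ≤ k) :
    (Finset.univ.filter fun v : Fin k → F => zb c v).card = q ^ (k - c) := by
  rw [← Fintype.card_subtype]
  have e : {v : Fin k → F // zb c v} ≃ (Fin (k - c) → F) := by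
    refine ⟨fun v i => v.1 ⟨c + i.1, by omega⟩,
      fun f => ⟨fun t => if h : c ≤ (t : ℕ) then f ⟨(t : ℕ) - c, by omega⟩ else 0,
        fun t ht => dif_neg (by omega)⟩, ?_, ?_⟩
    · intro v
      apply Subtype.ext
      funext t
      by_cases h : c ≤ (t : ℕ)
      · show (if h : c ≤ (t : ℕ) then _ else 0) = v.1 t
        rw [dif_pos h]
        exact congrArg v.1 (Fin.ext (by simp only [Fin.val_mk]; omega))
      · show (if h : c ≤ (t : ℕ) then _ else 0) = v.1 t
        rw [dif_neg h]
        exact (v.2 t (by omega)).symm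
    · intro f
      funext i
      show (if h : c ≤ c + i.1 then _ else 0) = f i
      rw [dif_pos (by omega)]
      exact congrArg f (Fin.ext (by simp only [Fin.val_mk]; omega))
  rw [Fintype.card_congr e, Fintype.card_fun, hF, Fintype.card_fin]

lemma dot_count (q : ℕ) (hF : Fintype.card F = q) {c : ℕ} (hck : c < k)
    (x v0 : Fin k → F) (hz0 : zb c v0) (hd0 : dotp v0 x ≠ 0) :
    (Finset.univ.filter fun v => zb c v ∧ dotp v x ≠ 0).card
      = q ^ (k - c) - q ^ (k - c - 1) := by
  have hq0 : 0 < q := by rw [← hF]; exact Fintype.card_pos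
  set Vf := Finset.univ.filter (fun v : Fin k → F => zb c v) with hVf
  have hVc : Vf.card = q ^ (k - c) := zb_card q hF (le_of_lt hck)
  have hfw : Vf.card = ∑ y : F, (Vf.filter fun v => dotp v x = y).card :=
    Finset.card_eq_sum_card_fiberwise (fun v _ => Finset.mem_univ (dotp v x))
  have hconst : ∀ y y' : F,
      (Vf.filter fun v => dotp v x = y).card = (Vf.filter fun v => dotp v x = y').card := by
    intro y y'
    have key : ∀ (a b : F) (v : Fin k → F), v ∈ Vf.filter (fun v => dotp v x = a) →
        v + ((b - a) * (dotp v0 x)⁻¹) • v0 ∈ Vf.filter (fun v => dotp v x = b) := by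
      intro a b v hv
      rw [Finset.mem_filter] at hv
      obtain ⟨hv1, hv2⟩ := hv
      rw [hVf, Finset.mem_filter] at hv1
      rw [Finset.mem_filter]
      constructor
      · rw [hVf, Finset.mem_filter]
        refine ⟨Finset.mem_univ _, fun t ht => ?_⟩
        show v t + ((b - a) * (dotp v0 x)⁻¹) * v0 t = 0
        rw [hv1.2 t ht, hz0 t ht, mul_zero, add_zero]
      · rw [dotp_add_left, dotp_smul_left, hv2, inv_mul_cancel_right₀ hd0]
        ring
    refine Finset.card_bij' (fun v _ => v + ((y' - y) * (dotp v0 x)⁻¹) • v0)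
      (fun v _ => v + ((y - y') * (dotp v0 x)⁻¹) • v0) ?_ ?_ ?_ ?_
    · intro v hv; exact key y y' v hv
    · intro v hv; exact key y' y v hv
    · intro v _
      have : ((y - y') * (dotp v0 x)⁻¹) = -(((y' - y) * (dotp v0 x)⁻¹)) := by ring
      rw [this]
      module
    · intro v _
      have : ((y' - y) * (dotp v0 x)⁻¹) = -(((y - y') * (dotp v0 x)⁻¹)) := by ring
      rw [this]
      module
  have hq_card : (Finset.univ : Finset F).card = q := by rw [Finset.card_univ, hF]
  have hsum0 : Vf.card = q * (Vf.filter fun v => dotp v x = 0).card := by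
    rw [hfw, Finset.sum_congr rfl (fun y _ => hconst y 0), Finset.sum_const, hq_card,
      smul_eq_mul]
  have hpow : q ^ (k - c) = q * q ^ (k - c - 1) := by
    rw [← pow_succ']
    congr 1
    omega
  have hfib0 : (Vf.filter fun v => dotp v x = 0).card = q ^ (k - c - 1) := by
    apply Nat.eq_of_mul_eq_mul_left hq0
    rw [← hsum0, hVc, hpow]
  have hsplit := Finset.card_filter_add_card_filter_not
    (s := Vf) (fun v => dotp v x = 0)
  have hgoal : (Finset.univ.filter fun v : Fin k → F => zb c v ∧ dotp v x ≠ 0)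
      = Vf.filter (fun v => ¬ dotp v x = 0) := by
    rw [hVf, Finset.filter_filter]
  rw [hgoal, ← hfib0, ← hVc]
  omega

lemma geom_nat {q : ℕ} (hq : 1 ≤ q) : ∀ m : ℕ,
    (q - 1) * ∑ j ∈ Finset.range m, q ^ j = q ^ m - 1 := by
  intro m
  induction m with
  | zero => simp
  | succ m ih =>
    rw [Finset.sum_range_succ, Nat.mul_add, ih]
    have h4 : ((q - 1) + 1) * q ^ m = (q - 1) * q ^ m + 1 * q ^ m := add_mul _ _ _
    have h2 : (q - 1) + 1 = q := by omega
    rw [h2] at h4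
    have h3 : q ^ (m + 1) = q * q ^ m := pow_succ' q m
    have h5 : 1 ≤ q ^ m := Nat.one_le_pow _ _ (by omega)
    omega

lemma rep_zb_card (q : ℕ) (hq2 : 2 ≤ q) (hF : Fintype.card F = q) {c : ℕ} (hc : c ≤ k) :
    (Finset.univ.filter fun v : Fin k → F => isRep v ∧ zb c v).card
      = ∑ j ∈ Finset.range (k - c), q ^ j := by
  have hzb0 : zb c (0 : Fin k → F) := fun t _ => rfl
  have hsc := scale_count q hF (fun v : Fin k → F => zb c v ∧ v ≠ 0)
    (fun h => h.2 rfl) (by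
      intro a ha v
      show (zb c (a • v) ∧ a • v ≠ 0) ↔ (zb c v ∧ v ≠ 0)
      constructor
      · rintro ⟨h1, h2⟩
        refine ⟨fun t ht => ?_, fun h0 => h2 (by rw [h0]; exact smul_zero a)⟩
        have h3 : a * v t = 0 := h1 t ht
        exact (mul_eq_zero.1 h3).resolve_left ha
      · rintro ⟨h1, h2⟩
        refine ⟨fun t ht => ?_, fun h0 => h2 ((smul_eq_zero.1 h0).resolve_left ha)⟩
        show a * v t = 0
        rw [h1 t ht, mul_zero])
  have step : (q - 1) * (Finset.univ.filter fun v : Fin k → F => isRep v ∧ zb c v).card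
      = (Finset.univ.filter fun v : Fin k → F => zb c v ∧ v ≠ 0).card := by
    refine ((congrArg (fun z => (q - 1) * z)
      (filter_card_congr fun a _ => ?_)).trans hsc).trans (filter_card_congr fun a _ => Iff.rfl)
    constructor
    · rintro ⟨h1, h2⟩; exact ⟨h1, h2, isRep_ne_zero h1⟩
    · rintro ⟨h1, h2, _⟩; exact ⟨h1, h2⟩
  have hAset : (Finset.univ.filter fun v : Fin k → F => zb c v ∧ v ≠ 0)
      = (Finset.univ.filter fun v : Fin k → F => zb c v).erase 0 := by
    ext v
    rw [Finset.mem_erase, Finset.mem_filter, Finset.mem_filter]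
    tauto
  have hmem0 : (0 : Fin k → F) ∈ (Finset.univ.filter fun v : Fin k → F => zb c v) := by
    rw [Finset.mem_filter]; exact ⟨Finset.mem_univ _, hzb0⟩
  rw [hAset, Finset.card_erase_of_mem hmem0, zb_card q hF hc] at step
  have hgeom := geom_nat (by omega : 1 ≤ q) (k - c)
  have hq1 : 0 < q - 1 := by omega
  apply Nat.eq_of_mul_eq_mul_left hq1
  rw [step, hgeom]

lemma rep_dot_scale (q : ℕ) (hF : Fintype.card F = q) (c : ℕ) (x : Fin k → F) :
    (q - 1) * (Finset.univ.filter fun v : Fin k → F =>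
        isRep v ∧ (zb c v ∧ dotp v x ≠ 0)).card
      = (Finset.univ.filter fun v : Fin k → F => zb c v ∧ dotp v x ≠ 0).card := by
  have hsc := scale_count q hF (fun v : Fin k → F => zb c v ∧ dotp v x ≠ 0)
    (fun h => h.2 (dotp_zero_left x))
    (by
      intro a ha v
      show (zb c (a • v) ∧ dotp (a • v) x ≠ 0) ↔ (zb c v ∧ dotp v x ≠ 0)
      have hz : zb c (a • v) ↔ zb c v := by
        constructor
        · intro h1 t ht
          have h2 : a * v t = 0 := h1 t ht
          exact (mul_eq_zero.1 h2).resolve_left ha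
        · intro h1 t ht
          show a * v t = 0
          rw [h1 t ht, mul_zero]
      rw [hz, dotp_smul_left, mul_ne_zero_iff]
      tauto)
  exact ((congrArg (fun z => (q - 1) * z)
    (filter_card_congr fun a _ => Iff.rfl)).trans hsc).trans
    (filter_card_congr fun a _ => Iff.rfl)

lemma rep_dot_card_eq (q : ℕ) (hq2 : 2 ≤ q) (hF : Fintype.card F = q) {c : ℕ}
    (hck : c < k) (x v0 : Fin k → F) (hz0 : zb c v0) (hd0 : dotp v0 x ≠ 0) :
    (Finset.univ.filter fun v : Fin k → F =>
        isRep v ∧ (zb c v ∧ dotp v x ≠ 0)).card = q ^ (k - c - 1) := by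
  have hsc := rep_dot_scale q hF c x
  have hA : (Finset.univ.filter fun v : Fin k → F => zb c v ∧ dotp v x ≠ 0).card
      = q ^ (k - c) - q ^ (k - c - 1) := dot_count q hF hck x v0 hz0 hd0
  rw [hA] at hsc
  have hpow : q ^ (k - c) = q * q ^ (k - c - 1) := by
    rw [← pow_succ']
    congr 1
    omega
  have hid : q ^ (k - c) - q ^ (k - c - 1) = (q - 1) * q ^ (k - c - 1) := by
    rw [Nat.sub_mul, one_mul, ← hpow]
  rw [hid] at hsc
  exact Nat.eq_of_mul_eq_mul_left (by omega) hsc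

lemma rep_dot_card_le (q : ℕ) (hq2 : 2 ≤ q) (hF : Fintype.card F = q) {c : ℕ}
    (hck : c < k) (x : Fin k → F) :
    (Finset.univ.filter fun v : Fin k → F =>
        isRep v ∧ (zb c v ∧ dotp v x ≠ 0)).card ≤ q ^ (k - c - 1) := by
  rcases Finset.eq_empty_or_nonempty
    (Finset.univ.filter fun v : Fin k → F => zb c v ∧ dotp v x ≠ 0) with he | hne
  · have hsc := rep_dot_scale q hF c x
    rw [he, Finset.card_empty] at hsc
    have := Nat.mul_eq_zero.1 hsc
    omega
  · obtain ⟨v0, hv0⟩ := hne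
    rw [Finset.mem_filter] at hv0
    rw [rep_dot_card_eq q hq2 hF hck x v0 hv0.2.1 hv0.2.2]

end Counts

section Upper
open Finset

lemma card_eq_card_of_iff {α : Type} {s t : Finset α} (h : ∀ a, a ∈ s ↔ a ∈ t) :
    s.card = t.card := congrArg Finset.card (Finset.ext h)

/-- fibers of the first projection of a sigma type over `Fin`s -/
def sigmaFiberEquiv' {α : Type} (g : α → ℕ) (a : α) :
    {p : Σ x : α, Fin (g x) // p.1 = a} ≃ Fin (g a) where
  toFun p := Fin.cast (congrArg g p.2) p.1.2
  invFun x := ⟨⟨a, x⟩, rfl⟩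
  left_inv := by rintro ⟨⟨x, y⟩, h⟩; dsimp only at h; subst h; rfl
  right_inv := fun x => rfl

/-- enumerate a multiset given by a multiplicity function -/
lemma exists_enum {α : Type} [Fintype α] (g : α → ℕ) :
    ∃ col : Fin (∑ v : α, g v) → α,
      ∀ (v : α) (t : Finset (Fin (∑ v : α, g v))),
        (∀ j, j ∈ t ↔ col j = v) → t.card = g v := by
  classical
  have hcard : Fintype.card (Σ v : α, Fin (g v)) = ∑ v : α, g v := by
    rw [Fintype.card_sigma]
    simp
  set E2 := (finCongr hcard).symm.trans (Fintype.equivFin (Σ v : α, Fin (g v))).symm with hE2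
  refine ⟨fun j => (E2 j).1, fun v t ht => ?_⟩
  have h1 : t.card = Fintype.card {j : Fin (∑ v : α, g v) // (E2 j).1 = v} := by
    rw [Fintype.card_subtype]
    exact congrArg Finset.card (Finset.ext fun j => by
      rw [ht j, Finset.mem_filter]
      exact ⟨fun h => ⟨Finset.mem_univ _, h⟩, fun h => h.2⟩)
  rw [h1]
  have e1 : {j : Fin (∑ v : α, g v) // (E2 j).1 = v} ≃ {p : Σ x : α, Fin (g x) // p.1 = v} :=
    Equiv.subtypeEquiv E2 (fun j => Iff.rfl)
  rw [Fintype.card_congr (e1.trans (sigmaFiberEquiv' g v))]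
  exact Fintype.card_fin _

variable {F : Type} [Field F] [Fintype F]

lemma exists_LRC (q : ℕ) (hq2 : 2 ≤ q) (hF : Fintype.card F = q) (k r d : ℕ)
    (hk : 2 ≤ k) (hr : 1 ≤ r) (hd : ((k - 1) * (q - 1) + 2) * q ^ (k - 1) ≤ d) :
    ∃ C : Submodule F (Fin (griesmer q k d) → F), IsCode k d C ∧ HasLocality C r := by
  have hq0 : 0 < q := by omega
  have hQ1 : 0 < q ^ (k - 1) := pow_pos hq0 _
  have hposd : 0 < ((k - 1) * (q - 1) + 2) * q ^ (k - 1) := Nat.mul_pos (by omega) hQ1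
  have hd1 : 1 ≤ d := by omega
  obtain ⟨s, M, hdm, hmlt⟩ : ∃ s M : ℕ,
      q ^ (k - 1) * s + M = d + q ^ (k - 1) - 1 ∧ M < q ^ (k - 1) :=
    ⟨(d + q ^ (k - 1) - 1) / q ^ (k - 1), (d + q ^ (k - 1) - 1) % q ^ (k - 1),
      Nat.div_add_mod _ _, Nat.mod_lt _ hQ1⟩
  have hcomm : s * q ^ (k - 1) = q ^ (k - 1) * s := Nat.mul_comm _ _
  have hds : d ≤ s * q ^ (k - 1) := by omega
  have hsd : s * q ^ (k - 1) < d + q ^ (k - 1) := by omega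
  have hs1 : 1 ≤ s := by
    rcases Nat.eq_zero_or_pos s with h | h
    · rw [h, zero_mul] at hds; omega
    · exact h
  obtain ⟨e, he, hde⟩ : ∃ e : ℕ, e < q ^ (k - 1) ∧ d + e = s * q ^ (k - 1) :=
    ⟨s * q ^ (k - 1) - d, by omega, by omega⟩
  set a : ℕ → ℕ := fun i => e / q ^ i % q with hadef
  have ha_lt : ∀ i, a i ≤ q - 1 := fun i => by
    have h1 : a i = e / q ^ i % q := by simp only [hadef]
    have h2 : e / q ^ i % q < q := Nat.mod_lt _ hq0
    omega
  have hadig : ∑ i ∈ Finset.range (k - 1), a i * q ^ i = e := by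
    have h1 := digit_sum q (k - 1) e
    rw [Nat.mod_eq_of_lt he] at h1
    exact h1
  set ρ : (Fin k → F) → ℕ :=
    fun v => ∑ i ∈ Finset.range (k - 1), if zb (k - 1 - i) v then a i else 0 with hρdef
  have hρ_le : ∀ v, ρ v ≤ (k - 1) * (q - 1) := by
    intro v
    simp only [hρdef]
    calc (∑ i ∈ Finset.range (k - 1), if zb (k - 1 - i) v then a i else 0)
        ≤ ∑ i ∈ Finset.range (k - 1), (q - 1) := Finset.sum_le_sum (fun i _ => by
          split
          · exact ha_lt i
          · omega)
      _ = (k - 1) * (q - 1) := by rw [Finset.sum_const, Finset.card_range, smul_eq_mul]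
  have hs_big : (k - 1) * (q - 1) + 2 ≤ s := by
    by_contra hcon
    push_neg at hcon
    have : s * q ^ (k - 1) < ((k - 1) * (q - 1) + 2) * q ^ (k - 1) :=
      (Nat.mul_lt_mul_right hQ1).2 (by omega)
    omega
  set mlt : (Fin k → F) → ℕ := fun v => if isRep v then s - ρ v else 0 with hmdef
  -- enumerate columns
  obtain ⟨col, hcol'⟩ := exists_enum mlt
  -- the generator map
  set φ : (Fin k → F) →ₗ[F] (Fin (∑ v : Fin k → F, mlt v) → F) :=
    { toFun := fun x j => dotp (col j) x
      map_add' := fun x y => by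
        funext j
        exact dotp_add_right (col j) x y
      map_smul' := fun c x => by
        funext j
        simp only [RingHom.id_apply, Pi.smul_apply, smul_eq_mul]
        exact dotp_smul_right c (col j) x } with hφdef
  have hφapp : ∀ (x : Fin k → F) (j : Fin (∑ v : Fin k → F, mlt v)),
      φ x j = dotp (col j) x := fun x j => rfl
  -- every column is a representative, with multiplicity ≥ 2
  have hm2 : ∀ v : Fin k → F, isRep v → 2 ≤ mlt v := by
    intro v hv
    have h1 : mlt v = s - ρ v := by simp only [hmdef]; rw [if_pos hv]
    have := hρ_le v
    omega
  have hcolrep : ∀ j, isRep (col j) := by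
    intro j
    by_contra hcon
    have h0 : mlt (col j) = 0 := by simp only [hmdef]; exact if_neg hcon
    have h1 : (Finset.univ.filter fun j' => col j' = col j).card = mlt (col j) :=
      hcol' (col j) _ (fun j' => by
        rw [Finset.mem_filter]
        exact ⟨fun h => h.2, fun h => ⟨Finset.mem_univ _, h⟩⟩)
    have hjmem : j ∈ Finset.univ.filter (fun j' => col j' = col j) := by
      rw [Finset.mem_filter]; exact ⟨Finset.mem_univ _, rfl⟩
    have := Finset.card_pos.2 ⟨j, hjmem⟩
    omega
  -- weight formula
  have hwt : ∀ x : Fin k → F, hamWt (φ x)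
      = ∑ v ∈ Finset.univ.filter (fun v : Fin k → F => isRep v),
          if dotp v x ≠ 0 then mlt v else 0 := by
    intro x
    unfold hamWt
    have hmem : ∀ j ∈ Finset.univ.filter (fun j => φ x j ≠ 0),
        col j ∈ Finset.univ.filter (fun v : Fin k → F => isRep v) := fun j _ => by
      rw [Finset.mem_filter]; exact ⟨Finset.mem_univ _, hcolrep j⟩
    rw [Finset.card_eq_sum_card_fiberwise hmem]
    refine Finset.sum_congr rfl fun v hv => ?_
    by_cases hdv : dotp v x ≠ 0
    · rw [if_pos hdv]
      refine hcol' v _ (fun j => ?_)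
      rw [Finset.mem_filter, Finset.mem_filter]
      constructor
      · rintro ⟨⟨_, _⟩, h2⟩
        exact h2
      · intro h2
        refine ⟨⟨Finset.mem_univ _, ?_⟩, h2⟩
        rw [hφapp, h2]
        exact hdv
    · rw [if_neg hdv]
      rw [Finset.card_eq_zero]
      apply Finset.eq_empty_of_forall_notMem
      intro j hj
      rw [Finset.mem_filter, Finset.mem_filter] at hj
      apply hj.1.2
      rw [hφapp, hj.2]
      push_neg at hdv
      exact hdv
  -- injectivity
  have hexcol : ∀ v : Fin k → F, isRep v → ∃ j, col j = v := by
    intro v hv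
    have h1 : (Finset.univ.filter fun j => col j = v).card = mlt v :=
      hcol' v _ (fun j => by
        rw [Finset.mem_filter]
        exact ⟨fun h => h.2, fun h => ⟨Finset.mem_univ _, h⟩⟩)
    have h2 := hm2 v hv
    have hpos : 0 < (Finset.univ.filter fun j => col j = v).card := by omega
    obtain ⟨j, hj⟩ := Finset.card_pos.1 hpos
    exact ⟨j, (Finset.mem_filter.1 hj).2⟩
  have hinj : Function.Injective φ := by
    rw [← LinearMap.ker_eq_bot]
    rw [Submodule.eq_bot_iff]
    intro x hx
    by_contra hx0
    have hex : ∃ i, x i ≠ 0 := by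
      by_contra hc; push_neg at hc; exact hx0 (funext hc)
    obtain ⟨i0, hi0⟩ := hex
    obtain ⟨j, hj⟩ := hexcol (Pi.single i0 (1 : F)) (isRep_single i0)
    have h1 : φ x j = 0 := by rw [LinearMap.mem_ker.1 hx]; rfl
    rw [hφapp, hj, dotp_single] at h1
    exact hi0 h1
  set C := LinearMap.range φ with hCdef
  have hrk : Module.finrank F ↥C = k := by
    rw [hCdef, LinearMap.finrank_range_of_inj hinj, Module.finrank_fin_fun]
  -- distance
  have hdist : ∀ x : Fin k → F, x ≠ 0 → d ≤ hamWt (φ x) := by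
    intro x hx0
    have hex : ∃ i, x i ≠ 0 := by
      by_contra hc; push_neg at hc; exact hx0 (funext hc)
    obtain ⟨i0, hi0⟩ := hex
    set T := Finset.univ.filter (fun v : Fin k → F => isRep v ∧ dotp v x ≠ 0) with hTdef
    have hT : T.card = q ^ (k - 1) := by
      have h1 := rep_dot_card_eq q hq2 hF (show 0 < k by omega) x (Pi.single i0 1)
        (fun t ht => absurd ht (by omega)) (by rw [dotp_single]; exact hi0)
      have h2 : T = Finset.univ.filter
          (fun v : Fin k → F => isRep v ∧ (zb 0 v ∧ dotp v x ≠ 0)) := by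
        rw [hTdef]
        apply Finset.filter_congr
        intro v _
        constructor
        · rintro ⟨hA, hB⟩; exact ⟨hA, fun t ht => absurd ht (by omega), hB⟩
        · rintro ⟨hA, _, hB⟩; exact ⟨hA, hB⟩
      rw [h2, h1]
      norm_num
    have hw3 : hamWt (φ x) = ∑ v ∈ T, (s - ρ v) := by
      rw [hwt x, Finset.sum_filter, hTdef, Finset.sum_filter]
      refine Finset.sum_congr rfl fun v _ => ?_
      by_cases h1 : isRep v
      · rw [if_pos h1]
        by_cases h2 : dotp v x ≠ 0
        · rw [if_pos h2, if_pos (⟨h1, h2⟩ : isRep v ∧ dotp v x ≠ 0)]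
          simp only [hmdef]
          rw [if_pos h1]
        · rw [if_neg h2, if_neg (fun hc : isRep v ∧ dotp v x ≠ 0 => h2 hc.2)]
      · rw [if_neg h1, if_neg (fun hc : isRep v ∧ dotp v x ≠ 0 => h1 hc.1)]
    have hsplit : ∑ v ∈ T, (s - ρ v) + ∑ v ∈ T, ρ v = q ^ (k - 1) * s := by
      rw [← Finset.sum_add_distrib]
      have hpt : ∀ v ∈ T, (s - ρ v) + ρ v = s := fun v _ => by
        have h1 := hρ_le v
        omega
      rw [Finset.sum_congr rfl hpt, Finset.sum_const, smul_eq_mul, hT]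
    have hρsum : ∑ v ∈ T, ρ v ≤ e := by
      have hswap : ∑ v ∈ T, ρ v
          = ∑ i ∈ Finset.range (k - 1), ∑ v ∈ T, (if zb (k - 1 - i) v then a i else 0) := by
        simp only [hρdef]
        exact Finset.sum_comm
      rw [hswap, ← hadig]
      refine Finset.sum_le_sum fun i hi => ?_
      rw [Finset.mem_range] at hi
      have hki : k - 1 - i < k := by omega
      have hexp : k - (k - 1 - i) - 1 = i := by omega
      have hbnd : (Finset.univ.filter fun v : Fin k → F =>
          isRep v ∧ (zb (k - 1 - i) v ∧ dotp v x ≠ 0)).card ≤ q ^ i := by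
        have h3 := rep_dot_card_le q hq2 hF hki x
        rw [hexp] at h3
        exact h3
      calc (∑ v ∈ T, if zb (k - 1 - i) v then a i else 0)
          = ∑ v ∈ T.filter (fun v => zb (k - 1 - i) v), a i := (Finset.sum_filter _ _).symm
        _ = (T.filter (fun v => zb (k - 1 - i) v)).card * a i := by
            rw [Finset.sum_const, smul_eq_mul]
        _ ≤ q ^ i * a i := by
            refine Nat.mul_le_mul_right _ (le_trans (le_of_eq (card_eq_card_of_iff
              (fun v => ?_))) hbnd)
            rw [Finset.mem_filter, hTdef, Finset.mem_filter, Finset.mem_filter]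
            constructor
            · rintro ⟨⟨_, hA, hB⟩, hC⟩
              exact ⟨Finset.mem_univ _, hA, hC, hB⟩
            · rintro ⟨_, hA, hC, hB⟩
              exact ⟨⟨Finset.mem_univ _, hA, hB⟩, hC⟩
        _ = a i * q ^ i := Nat.mul_comm _ _
    have hcm : q ^ (k - 1) * s = s * q ^ (k - 1) := Nat.mul_comm _ _
    omega
  -- the code
  have hlen : (∑ v : Fin k → F, mlt v) = griesmer q k d := by
    have hL1 : (∑ v : Fin k → F, mlt v)
        = ∑ v ∈ Finset.univ.filter (fun v : Fin k → F => isRep v), (s - ρ v) := by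
      simp only [hmdef]
      exact (Finset.sum_filter _ _).symm
    have hRcard : (Finset.univ.filter fun v : Fin k → F => isRep v).card
        = ∑ j ∈ Finset.range k, q ^ j := by
      refine Eq.trans (card_eq_card_of_iff fun v => ?_)
        (rep_zb_card q hq2 hF (show (0:ℕ) ≤ k by omega))
      rw [Finset.mem_filter, Finset.mem_filter]
      exact ⟨fun h => ⟨h.1, h.2, fun t ht => absurd ht (by omega)⟩, fun h => ⟨h.1, h.2.1⟩⟩
    have hsum1 : (∑ v ∈ Finset.univ.filter (fun v : Fin k → F => isRep v), (s - ρ v))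
        + ∑ v ∈ Finset.univ.filter (fun v : Fin k → F => isRep v), ρ v
        = s * (∑ j ∈ Finset.range k, q ^ j) := by
      rw [← Finset.sum_add_distrib]
      have hpt : ∀ v ∈ Finset.univ.filter (fun v : Fin k → F => isRep v),
          (s - ρ v) + ρ v = s := fun v _ => by
        have h1 := hρ_le v
        omega
      rw [Finset.sum_congr rfl hpt, Finset.sum_const, smul_eq_mul, hRcard, Nat.mul_comm]
    have hρsumR : ∑ v ∈ Finset.univ.filter (fun v : Fin k → F => isRep v), ρ v
        = ∑ i ∈ Finset.range (k - 1), a i * (∑ j ∈ Finset.range (i + 1), q ^ j) := by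
      have hswap : ∑ v ∈ Finset.univ.filter (fun v : Fin k → F => isRep v), ρ v
          = ∑ i ∈ Finset.range (k - 1),
              ∑ v ∈ Finset.univ.filter (fun v : Fin k → F => isRep v),
                (if zb (k - 1 - i) v then a i else 0) := by
        simp only [hρdef]
        exact Finset.sum_comm
      rw [hswap]
      refine Finset.sum_congr rfl fun i hi => ?_
      rw [Finset.mem_range] at hi
      have hcc : (Finset.univ.filter fun v : Fin k → F =>
          isRep v ∧ zb (k - 1 - i) v).card = ∑ j ∈ Finset.range (i + 1), q ^ j := by
        have h1 := rep_zb_card q hq2 hF (show k - 1 - i ≤ k by omega)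
        rw [h1]
        have e2 : k - (k - 1 - i) = i + 1 := by omega
        rw [e2]
      calc (∑ v ∈ Finset.univ.filter (fun v : Fin k → F => isRep v),
              if zb (k - 1 - i) v then a i else 0)
          = ∑ v ∈ (Finset.univ.filter (fun v : Fin k → F => isRep v)).filter
              (fun v => zb (k - 1 - i) v), a i := (Finset.sum_filter _ _).symm
        _ = ((Finset.univ.filter (fun v : Fin k → F => isRep v)).filter
              (fun v => zb (k - 1 - i) v)).card * a i := by
            rw [Finset.sum_const, smul_eq_mul]
        _ = (∑ j ∈ Finset.range (i + 1), q ^ j) * a i := by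
            rw [← hcc]
            refine congrArg (fun z => z * a i) (card_eq_card_of_iff fun v => ?_)
            rw [Finset.mem_filter, Finset.mem_filter, Finset.mem_filter]
            exact ⟨fun h => ⟨Finset.mem_univ _, h.1.2, h.2⟩,
              fun h => ⟨⟨Finset.mem_univ _, h.2.1⟩, h.2.2⟩⟩
        _ = a i * (∑ j ∈ Finset.range (i + 1), q ^ j) := Nat.mul_comm _ _
    -- Griesmer side
    have hterm : ∀ t ∈ Finset.range k,
        ⌈(d : ℚ) / (q : ℚ) ^ t⌉₊ + e / q ^ t = s * q ^ (k - 1 - t) := by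
      intro t ht
      rw [Finset.mem_range] at ht
      have hqt : 0 < q ^ t := pow_pos hq0 t
      obtain ⟨E, Em, hEdef, hE1, hE2⟩ : ∃ E Em : ℕ,
          E = e / q ^ t ∧ q ^ t * E + Em = e ∧ Em < q ^ t :=
        ⟨e / q ^ t, e % q ^ t, rfl, Nat.div_add_mod _ _, Nat.mod_lt _ hqt⟩
      rw [← hEdef]
      have hpowsplit : q ^ t * q ^ (k - 1 - t) = q ^ (k - 1) := by
        rw [← pow_add]
        congr 1
        omega
      have hlt : E < q ^ (k - 1 - t) := by
        by_contra hcon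
        push_neg at hcon
        have h3 : q ^ (k - 1) ≤ q ^ t * E := by
          calc q ^ (k - 1) = q ^ t * q ^ (k - 1 - t) := hpowsplit.symm
            _ ≤ q ^ t * E := Nat.mul_le_mul_left _ hcon
        omega
      have hps2 : q ^ t * (s * q ^ (k - 1 - t)) = s * q ^ (k - 1) := by
        rw [← hpowsplit]
        ring
      have hmulX : q ^ t * (s * q ^ (k - 1 - t) - E)
          = s * q ^ (k - 1) - q ^ t * E := by
        rw [Nat.mul_sub, hps2]
      have hceil : ⌈(d : ℚ) / (q : ℚ) ^ t⌉₊ = s * q ^ (k - 1 - t) - E := by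
        apply natCeil_pow_eq hq0
        · omega
        · omega
      rw [hceil]
      have hEle : E ≤ s * q ^ (k - 1 - t) := by
        have h4 : q ^ (k - 1 - t) ≤ s * q ^ (k - 1 - t) := Nat.le_mul_of_pos_left _ hs1
        omega
      omega
    have hgr : griesmer q k d + ∑ t ∈ Finset.range k, e / q ^ t
        = s * (∑ j ∈ Finset.range k, q ^ j) := by
      unfold griesmer
      rw [← Finset.sum_add_distrib, Finset.sum_congr rfl hterm, ← Finset.mul_sum]
      congr 1
      exact Finset.sum_range_reflect (fun j => q ^ j) k
    have hdig2 : ∑ t ∈ Finset.range k, e / q ^ t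
        = ∑ i ∈ Finset.range (k - 1), a i * (∑ j ∈ Finset.range (i + 1), q ^ j) := by
      have hstep : ∀ t ∈ Finset.range k, e / q ^ t
          = ∑ i ∈ Finset.range (k - 1), if t ≤ i then a i * q ^ (i - t) else 0 := by
        intro t ht
        rw [Finset.mem_range] at ht
        by_cases htk : k - 1 ≤ t
        · rw [Nat.div_eq_of_lt (lt_of_lt_of_le he (Nat.pow_le_pow_right (by omega) htk))]
          symm
          apply Finset.sum_eq_zero
          intro i hi
          rw [Finset.mem_range] at hi
          rw [if_neg (by omega)]
        · push_neg at htk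
          have hqt : 0 < q ^ t := pow_pos hq0 t
          have hpowsplit : q ^ (k - 1 - t) * q ^ t = q ^ (k - 1) := by
            rw [← pow_add]; congr 1; omega
          have hlt : e / q ^ t < q ^ (k - 1 - t) := by
            rw [Nat.div_lt_iff_lt_mul hqt, hpowsplit]
            exact he
          have hdigt := digit_sum q (k - 1 - t) (e / q ^ t)
          rw [Nat.mod_eq_of_lt hlt] at hdigt
          have hdd : ∀ j, e / q ^ t / q ^ j % q = a (t + j) := fun j => by
            rw [Nat.div_div_eq_div_mul, ← pow_add, hadef]
          have hfilt : (Finset.range (k - 1)).filter (fun i => t ≤ i)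
              = Finset.Ico t (k - 1) := by
            ext i
            rw [Finset.mem_filter, Finset.mem_range, Finset.mem_Ico]
            omega
          calc e / q ^ t = ∑ j ∈ Finset.range (k - 1 - t), e / q ^ t / q ^ j % q * q ^ j :=
                hdigt.symm
            _ = ∑ j ∈ Finset.range (k - 1 - t), a (t + j) * q ^ j := by
                refine Finset.sum_congr rfl fun j _ => ?_
                rw [hdd j]
            _ = ∑ i ∈ Finset.Ico t (k - 1), a i * q ^ (i - t) := by
                rw [Finset.sum_Ico_eq_sum_range]
                refine Finset.sum_congr rfl fun j _ => ?_
                have e3 : t + j - t = j := by omega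
                rw [e3]
            _ = ∑ i ∈ Finset.range (k - 1), if t ≤ i then a i * q ^ (i - t) else 0 := by
                rw [← hfilt, Finset.sum_filter]
      rw [Finset.sum_congr rfl hstep, Finset.sum_comm]
      refine Finset.sum_congr rfl fun i hi => ?_
      rw [Finset.mem_range] at hi
      have hfilt2 : (Finset.range k).filter (fun t => t ≤ i) = Finset.range (i + 1) := by
        ext t
        rw [Finset.mem_filter, Finset.mem_range, Finset.mem_range]
        omega
      rw [← Finset.sum_filter, hfilt2, Finset.mul_sum]
      rw [← Finset.sum_range_reflect (fun j => a i * q ^ j) (i + 1)]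
      refine Finset.sum_congr rfl fun t _ => ?_
      norm_num
    omega
  -- conclude
  rw [← hlen]
  refine ⟨C, ⟨hrk, ?_⟩, ?_⟩
  · intro c hc hc0
    obtain ⟨x, rfl⟩ := LinearMap.mem_range.1 hc
    have hx0 : x ≠ 0 := by
      rintro rfl
      exact hc0 (map_zero φ)
    exact hdist x hx0
  · intro j
    have hrepj := hcolrep j
    have hmj : 2 ≤ mlt (col j) := hm2 _ hrepj
    have hcardj : (Finset.univ.filter fun j' => col j' = col j).card = mlt (col j) :=
      hcol' (col j) _ (fun j' => by
        rw [Finset.mem_filter]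
        exact ⟨fun h => h.2, fun h => ⟨Finset.mem_univ _, h⟩⟩)
    have hj_mem : j ∈ Finset.univ.filter (fun j' => col j' = col j) := by
      rw [Finset.mem_filter]; exact ⟨Finset.mem_univ _, rfl⟩
    have hpos : 0 < ((Finset.univ.filter fun j' => col j' = col j).erase j).card := by
      rw [Finset.card_erase_of_mem hj_mem]
      omega
    obtain ⟨j', hj'⟩ := Finset.card_pos.1 hpos
    rw [Finset.mem_erase, Finset.mem_filter] at hj'
    refine ⟨{j'}, ?_, ?_, ?_⟩
    · rw [Finset.mem_singleton]
      exact fun h => hj'.1 h.symm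
    · rw [Finset.card_singleton]; exact hr
    · intro c hc c' hc' hagree
      obtain ⟨x, rfl⟩ := LinearMap.mem_range.1 hc
      obtain ⟨x', rfl⟩ := LinearMap.mem_range.1 hc'
      have hag := hagree j' (Finset.mem_singleton_self j')
      rw [hφapp, hφapp] at hag ⊢
      rw [← hj'.2.2]
      exact hag

end Upper

theorem griesmer_attained_for_large_d (q : ℕ) (hq : IsPrimePow q) (k r : ℕ)
    (hk : 2 ≤ k) (hr : 1 ≤ r) :
    ∃ d₀ : ℕ, ∀ d : ℕ, d₀ ≤ d → nLRC q k d r = griesmer q k d := by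
  have hq2 : 2 ≤ q := hq.two_le
  obtain ⟨p, n0, hp, hn0, rfl⟩ := hq
  have hp' : p.Prime := Nat.prime_iff.2 hp
  haveI := Fact.mk hp'
  refine ⟨((k - 1) * (p ^ n0 - 1) + 2) * (p ^ n0) ^ (k - 1), fun d hd => ?_⟩
  have hcard : Nat.card (GaloisField p n0) = p ^ n0 := GaloisField.card p n0 (by omega)
  have hfin : Finite (GaloisField p n0) := Nat.finite_of_card_ne_zero (by omega)
  letI : Fintype (GaloisField p n0) := Fintype.ofFinite _
  have hFc : Fintype.card (GaloisField p n0) = p ^ n0 := by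
    rw [← Nat.card_eq_fintype_card, hcard]
  obtain ⟨C, hcode, hloc⟩ := exists_LRC (p ^ n0) hq2 hFc k r d hk hr hd
  have hmem : griesmer (p ^ n0) k d ∈ {n | LRCExists (p ^ n0) n k d r} :=
    ⟨GaloisField p n0, inferInstance, hcard, C, hcode, hloc⟩
  have hub : nLRC (p ^ n0) k d r ≤ griesmer (p ^ n0) k d := Nat.sInf_le hmem
  have hne : {n | LRCExists (p ^ n0) n k d r}.Nonempty := ⟨_, hmem⟩
  have hlb : griesmer (p ^ n0) k d ≤ sInf {n | LRCExists (p ^ n0) n k d r} := by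
    obtain ⟨F', iF', hcard', C', hcode', hloc'⟩ := Nat.sInf_mem hne
    haveI : Finite F' := Nat.finite_of_card_ne_zero (by omega)
    letI : Fintype F' := Fintype.ofFinite F'
    have hFc' : Fintype.card F' = p ^ n0 := by
      rw [← Nat.card_eq_fintype_card, hcard']
    exact griesmer_le_of_code hq2 k hFc' _ d C' hcode'.1 hcode'.2
  exact le_antisymm hub hlb
end

section
/- Over the binary field, for each natural number t ≥ 0 one has n_2(3,3+4t,2) = 6+7t, n_2(3,4+4t,2) = 7+7t, n_2(3,5+4t,2) = 10+7t, and n_2(3,6+4t,2) = 11+7t; moreover n_2(3,1,2) = n_2(3,2,2) = 5. -/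
open scoped Classical

def GdGen (n d : ℕ) (g : Fin n → Fin 3 → ZMod 2) : Prop :=
  (∀ x : Fin 3 → ZMod 2, (∀ j, ∑ i, g j i * x i = 0) → x = 0) ∧
  (∀ x : Fin 3 → ZMod 2, x ≠ 0 → d ≤ (Finset.univ.filter fun j => ∑ i, g j i * x i ≠ 0).card) ∧
  (∀ j, (∃ j', j' ≠ j ∧ g j' = g j) ∨ ∃ j1 j2, j1 ≠ j ∧ j2 ≠ j ∧ g j = g j1 + g j2)

def simplexG : Fin 7 → Fin 3 → ZMod 2 :=
  ![![1,0,0],![0,1,0],![0,0,1],![1,1,0],![0,1,1],![1,0,1],![1,1,1]]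

lemma gd7 : GdGen 7 4 simplexG := ⟨by decide, by decide, by decide⟩
def g5 : Fin 5 → Fin 3 → ZMod 2 := ![![1,0,0],![0,1,0],![0,0,1],![1,1,0],![1,0,1]]
lemma gd5 : GdGen 5 2 g5 := ⟨by decide, by decide, by decide⟩
lemma gd5' : GdGen 5 1 g5 := ⟨by decide, by decide, by decide⟩
def g6 : Fin 6 → Fin 3 → ZMod 2 := ![![1,0,0],![0,1,0],![0,0,1],![1,1,0],![0,1,1],![1,0,1]]
lemma gd6 : GdGen 6 3 g6 := ⟨by decide, by decide, by decide⟩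
def g10 : Fin 10 → Fin 3 → ZMod 2 :=
  ![![1,0,0],![1,0,0],![0,1,0],![0,1,0],![0,0,1],![0,0,1],![1,1,0],![1,0,1],![0,1,1],![1,1,1]]
lemma gd10 : GdGen 10 5 g10 := ⟨by decide, by decide, by decide⟩
def g11 : Fin 11 → Fin 3 → ZMod 2 :=
  ![![1,0,0],![1,0,0],![0,1,0],![0,1,0],![0,0,1],![0,0,1],![1,1,0],![1,0,1],![0,1,1],![1,1,1],![1,1,1]]
lemma gd11 : GdGen 11 6 g11 := ⟨by decide, by decide, by decide⟩

lemma card_filter_append {n m : ℕ} (P : (Fin 3 → ZMod 2) → Prop) [DecidablePred P]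
    (g : Fin n → Fin 3 → ZMod 2) (s : Fin m → Fin 3 → ZMod 2) :
    (Finset.univ.filter fun j : Fin (n+m) => P (Fin.append g s j)).card
      = (Finset.univ.filter fun j : Fin n => P (g j)).card
        + (Finset.univ.filter fun j : Fin m => P (s j)).card := by
  classical
  rw [Finset.card_filter, Finset.card_filter, Finset.card_filter, Fin.sum_univ_add]
  simp [Fin.append_left, Fin.append_right]

lemma simplex_inj : ∀ x : Fin 3 → ZMod 2, (∀ j, ∑ i, simplexG j i * x i = 0) → x = 0 := by decide

lemma simplex_count : ∀ x : Fin 3 → ZMod 2, x ≠ 0 →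
    4 ≤ (Finset.univ.filter fun j : Fin 7 => ∑ i, simplexG j i * x i ≠ 0).card := by decide

lemma simplex_loc : ∀ j : Fin 7, ∃ j1 j2, j1 ≠ j ∧ j2 ≠ j ∧
    simplexG j = simplexG j1 + simplexG j2 := by decide

lemma gd_append {n d : ℕ} {g : Fin n → Fin 3 → ZMod 2} (h : GdGen n d g) :
    GdGen (n+7) (d+4) (Fin.append g simplexG) := by
  obtain ⟨h1, h2, h3⟩ := h
  refine ⟨?_, ?_, ?_⟩
  · intro x hx
    refine simplex_inj x fun j => ?_
    have := hx (Fin.natAdd n j)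
    rwa [Fin.append_right] at this
  · intro x hx
    have hc := card_filter_append (fun v : Fin 3 → ZMod 2 => ∑ i, v i * x i ≠ 0) g simplexG
    calc d + 4 ≤ (Finset.univ.filter fun j : Fin n => ∑ i, g j i * x i ≠ 0).card
        + (Finset.univ.filter fun j : Fin 7 => ∑ i, simplexG j i * x i ≠ 0).card :=
          Nat.add_le_add (h2 x hx) (simplex_count x hx)
      _ = _ := by
          rw [← hc]
  · intro j
    refine Fin.addCases (fun j0 => ?_) (fun j0 => ?_) j
    · rcases h3 j0 with ⟨j', hne, heq⟩ | ⟨j1, j2, hne1, hne2, heq⟩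
      · refine Or.inl ⟨Fin.castAdd 7 j', fun hc => hne ?_, ?_⟩
        · exact Fin.ext (by simpa [Fin.ext_iff] using hc)
        · rw [Fin.append_left, Fin.append_left]; exact heq
      · refine Or.inr ⟨Fin.castAdd 7 j1, Fin.castAdd 7 j2,
          fun hc => hne1 (Fin.ext (by simpa [Fin.ext_iff] using hc)),
          fun hc => hne2 (Fin.ext (by simpa [Fin.ext_iff] using hc)), ?_⟩
        rw [Fin.append_left, Fin.append_left, Fin.append_left]; exact heq
    · obtain ⟨j1, j2, hne1, hne2, heq⟩ := simplex_loc j0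
      refine Or.inr ⟨Fin.natAdd n j1, Fin.natAdd n j2,
        fun hc => hne1 (Fin.ext (by simpa [Fin.ext_iff, Nat.add_right_cancel_iff] using hc)),
        fun hc => hne2 (Fin.ext (by simpa [Fin.ext_iff, Nat.add_right_cancel_iff] using hc)), ?_⟩
      rw [Fin.append_right, Fin.append_right, Fin.append_right]; exact heq

def genMap {n : ℕ} (g : Fin n → Fin 3 → ZMod 2) :
    (Fin 3 → ZMod 2) →ₗ[ZMod 2] (Fin n → ZMod 2) where
  toFun x := fun j => ∑ i, g j i * x i
  map_add' x y := by
    funext j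
    simp [mul_add, Finset.sum_add_distrib]
  map_smul' a x := by
    funext j
    simp only [Pi.smul_apply, smul_eq_mul, RingHom.id_apply, Finset.mul_sum]
    exact Finset.sum_congr rfl fun i _ => by ring

lemma gd_bridge {n d : ℕ} {g : Fin n → Fin 3 → ZMod 2} (h : GdGen n d g) :
    ∃ (F : Type) (_ : Field F), Nat.card F = 2 ∧
      ∃ C : Submodule F (Fin n → F),
        (Module.finrank F ↥C = 3 ∧ ∀ c ∈ C, c ≠ 0 → d ≤ hamWt c) ∧
        (∀ i : Fin n, ∃ S : Finset (Fin n), i ∉ S ∧ S.card ≤ 2 ∧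
          ∀ c ∈ C, ∀ c' ∈ C, (∀ j ∈ S, c j = c' j) → c i = c' i) := by
  obtain ⟨h1, h2, h3⟩ := h
  refine ⟨ZMod 2, inferInstance, by simp [Nat.card_eq_fintype_card], LinearMap.range (genMap g), ⟨?_, ?_⟩, ?_⟩
  · have hinj : Function.Injective (genMap g) := by
      rw [← LinearMap.ker_eq_bot, LinearMap.ker_eq_bot']
      intro x hx
      exact h1 x fun j => congrFun hx j
    rw [LinearMap.finrank_range_of_inj hinj]
    simp [Module.finrank_pi]
  · rintro c ⟨x, rfl⟩ hc
    have hx : x ≠ 0 := by rintro rfl; exact hc (map_zero _)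
    have := h2 x hx
    unfold hamWt
    convert this using 2
    ext j
    simp only [Finset.mem_filter]
    exact Iff.rfl
  · intro i
    rcases h3 i with ⟨j', hne, heq⟩ | ⟨j1, j2, hne1, hne2, heq⟩
    · refine ⟨{j'}, by simpa using hne.symm, by simp, ?_⟩
      rintro c ⟨x, rfl⟩ c' ⟨y, rfl⟩ hag
      have := hag j' (Finset.mem_singleton_self j')
      show ∑ k, g i k * x k = ∑ k, g i k * y k
      rw [← heq]; exact this
    · refine ⟨{j1, j2}, ?_, Finset.card_insert_le _ _ |>.trans (by simp), ?_⟩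
      · simp only [Finset.mem_insert, Finset.mem_singleton]
        rintro (rfl | rfl); exact hne1 rfl; exact hne2 rfl
      · rintro c ⟨x, rfl⟩ c' ⟨y, rfl⟩ hag
        have e1 := hag j1 (by simp)
        have e2 := hag j2 (by simp)
        show ∑ k, g i k * x k = ∑ k, g i k * y k
        have expand : ∀ z : Fin 3 → ZMod 2, ∑ k, g i k * z k
            = (∑ k, g j1 k * z k) + ∑ k, g j2 k * z k := by
          intro z
          rw [heq, ← Finset.sum_add_distrib]
          exact Finset.sum_congr rfl fun k _ => by simp [add_mul]
        rw [expand x, expand y]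
        exact congrArg₂ (· + ·) e1 e2

lemma lemA {F : Type} [Field F] (hF : Nat.card F = 2) {n d : ℕ}
    (C : Submodule F (Fin n → F)) (h3 : Module.finrank F ↥C = 3)
    (hw : ∀ c ∈ C, c ≠ 0 → d ≤ hamWt c) : 7 * d ≤ 4 * n := by
  have : Finite F := Nat.finite_of_card_ne_zero (by omega)
  have : Fintype F := Fintype.ofFinite F
  have hcard : Fintype.card F = 2 := by rw [← Nat.card_eq_fintype_card, hF]
  have : FiniteDimensional F ↥C := inferInstance
  let b : Module.Basis (Fin 3) F ↥C := Module.finBasisOfFinrankEq F ↥C h3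
  set v : (Fin 3 → F) → (Fin n → F) := fun x => ∑ i, x i • ((b i : Fin n → F)) with hv
  have hvmem : ∀ x, v x ∈ C := fun x => Submodule.sum_mem _ fun i _ =>
    Submodule.smul_mem _ _ (b i).2
  have hvcoe : ∀ x, v x = ((∑ i, x i • b i : ↥C) : Fin n → F) := by
    intro x; simp [hv]
  have hvne : ∀ x : Fin 3 → F, x ≠ 0 → v x ≠ 0 := by
    intro x hx h0
    apply hx
    have : (∑ i, x i • b i : ↥C) = 0 := by
      apply Subtype.ext; rw [← hvcoe]; exact h0
    have hli := Fintype.linearIndependent_iff.mp b.linearIndependent x this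
    funext i; exact hli i
  have hwt : ∀ x : Fin 3 → F, x ≠ 0 → d ≤ hamWt (v x) := fun x hx =>
    hw _ (hvmem x) (hvne x hx)
  -- d ≤ n
  have hdn : d ≤ n := by
    have h1 := hwt (Pi.single 0 1) (by
      intro h; have := congrFun h 0; simp at this)
    have h2 : hamWt (v (Pi.single 0 1)) ≤ n := by
      unfold hamWt
      simpa using (Finset.card_filter_le Finset.univ (fun j : Fin n => v (Pi.single 0 1) j ≠ 0))
    omega
  classical
  set X : Finset (Fin 3 → F) := Finset.univ.filter (· ≠ 0) with hX
  have hXcard : X.card = 7 := by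
    rw [hX, Finset.filter_ne', Finset.card_erase_of_mem (Finset.mem_univ _)]
    simp [Fintype.card_pi, hcard]
  -- upper bound
  have hupper : ∀ x ∈ X, (Finset.univ.filter fun j => v x j = 0).card ≤ n - d := by
    intro x hx
    have hxne : x ≠ 0 := by simpa [hX] using hx
    have hsplit : (Finset.univ.filter fun j : Fin n => v x j = 0).card
        + (Finset.univ.filter fun j : Fin n => ¬ (v x j = 0)).card = n := by
      rw [Finset.card_filter_add_card_filter_not]
      simp
    have : hamWt (v x) = (Finset.univ.filter fun j => ¬ (v x j = 0)).card := by
      unfold hamWt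
      rfl
    have hd := hwt x hxne
    omega
  have hTupper : (∑ x ∈ X, (Finset.univ.filter fun j => v x j = 0).card) ≤ 7 * (n - d) := by
    calc _ ≤ X.card * (n - d) := Finset.sum_le_card_nsmul X _ _ hupper
    _ = 7 * (n - d) := by rw [hXcard]
  -- swap
  have hswap : (∑ x ∈ X, (Finset.univ.filter fun j => v x j = 0).card)
      = ∑ j : Fin n, (X.filter fun x => v x j = 0).card := by
    simp only [Finset.card_filter]
    exact Finset.sum_comm
  -- lower bound per column
  have hlower : ∀ j : Fin n, 3 ≤ (X.filter fun x => v x j = 0).card := by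
    intro j
    set ℓ : (Fin 3 → F) →ₗ[F] F :=
      { toFun := fun x => v x j
        map_add' := by
          intro a c
          simp [hv, Finset.sum_add_distrib, add_smul, add_mul]
        map_smul' := by
          intro a c
          simp [hv, Finset.smul_sum, smul_smul, Finset.mul_sum, mul_assoc]
      } with hl
    have hker : 2 ≤ Module.finrank F ↥(LinearMap.ker ℓ) := by
      have hrn := LinearMap.finrank_range_add_finrank_ker ℓ
      have hr1 : Module.finrank F ↥(LinearMap.range ℓ) ≤ 1 := by
        have := Submodule.finrank_le (LinearMap.range ℓ)
        simpa using this
      have hdom : Module.finrank F (Fin 3 → F) = 3 := by simp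
      omega
    have hcards : 4 ≤ Nat.card ↥(LinearMap.ker ℓ) := by
      have := Module.card_eq_pow_finrank (K := F) (V := ↥(LinearMap.ker ℓ))
      rw [Nat.card_eq_fintype_card, this, hcard]
      calc (4 : ℕ) = 2 ^ 2 := rfl
      _ ≤ _ := Nat.pow_le_pow_right (by norm_num) hker
    have hsub : Nat.card ↥(LinearMap.ker ℓ)
        = (Finset.univ.filter fun x : Fin 3 → F => v x j = 0).card := by
      have hiff : ∀ x : Fin 3 → F, (x ∈ LinearMap.ker ℓ) ↔ v x j = 0 := by
        intro x; rw [LinearMap.mem_ker]; exact Iff.rfl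
      rw [Nat.card_eq_fintype_card, Fintype.card_subtype, Finset.card_filter, Finset.card_filter]
      exact Finset.sum_congr rfl fun x _ => by rw [if_congr (hiff x) rfl rfl]
    have hXf : (X.filter fun x => v x j = 0)
        = ((Finset.univ.filter fun x : Fin 3 → F => v x j = 0)).erase 0 := by
      ext x
      simp only [hX, Finset.mem_filter, Finset.mem_erase, Finset.mem_univ, true_and]
    rw [hXf, Finset.card_erase_of_mem]
    · omega
    · simp [hv]
  have hTlower : 3 * n ≤ ∑ j : Fin n, (X.filter fun x => v x j = 0).card := by
    calc 3 * n = (Finset.univ : Finset (Fin n)).card * 3 := by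
          simp [Finset.card_univ, Nat.mul_comm]
    _ ≤ _ := Finset.card_nsmul_le_sum _ _ _ fun j _ => hlower j
  omega

lemma two_elt {F : Type} [Field F] (hF : Nat.card F = 2) : ∀ x : F, x = 0 ∨ x = 1 := by
  classical
  have : Finite F := Nat.finite_of_card_ne_zero (by omega)
  have : Fintype F := Fintype.ofFinite F
  have hcard : Fintype.card F = 2 := by rw [← Nat.card_eq_fintype_card, hF]
  intro x
  by_contra h
  push_neg at h
  obtain ⟨h0, h1⟩ := h
  have hc3 : ({0, 1, x} : Finset F).card = 3 :=
    Finset.card_eq_three.mpr ⟨0, 1, x, fun hh => one_ne_zero hh.symm, fun hh => h0 hh.symm,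
      fun hh => h1 hh.symm, rfl⟩
  have := Finset.card_le_card (Finset.subset_univ ({0, 1, x} : Finset F))
  rw [hc3, Finset.card_univ, hcard] at this
  omega

lemma one_add_one {F : Type} [Field F] (hF : Nat.card F = 2) : (1 : F) + 1 = 0 := by
  rcases two_elt hF ((1:F) + 1) with h | h
  · exact h
  · exfalso
    have : (1 : F) = 0 := by linear_combination h
    exact one_ne_zero this

lemma cast_odd_ne {F : Type} [Field F] (hF : Nat.card F = 2) {m : ℕ} (hm : ¬ Even m) :
    (m : F) ≠ 0 := by
  obtain ⟨k, hk⟩ := Nat.not_even_iff_odd.mp hm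
  subst hk
  push_cast
  intro h
  have h2 : (2 : F) = 0 := by
    have := one_add_one hF
    linear_combination this
  rw [h2] at h
  simp at h

lemma lemB {F : Type} [Field F] (hF : Nat.card F = 2) {n d : ℕ} (hd : ¬ Even d)
    (C : Submodule F (Fin n → F)) (h3 : Module.finrank F ↥C = 3)
    (hw : ∀ c ∈ C, c ≠ 0 → d ≤ hamWt c) : 7 * (d + 1) ≤ 4 * (n + 1) := by
  classical
  set φ : (Fin n → F) →ₗ[F] (Fin (n+1) → F) :=
    { toFun := fun c => Fin.snoc c (∑ j, c j)
      map_add' := by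
        intro a c
        funext i
        refine Fin.lastCases ?_ (fun i0 => ?_) i <;>
          simp [Fin.snoc_last, Fin.snoc_castSucc, Finset.sum_add_distrib]
      map_smul' := by
        intro a c
        funext i
        refine Fin.lastCases ?_ (fun i0 => ?_) i <;>
          simp [Fin.snoc_last, Fin.snoc_castSucc, Finset.mul_sum] } with hphi
  have hinj : Function.Injective φ := by
    rw [← LinearMap.ker_eq_bot, LinearMap.ker_eq_bot']
    intro c hc
    funext j
    have := congrFun hc (Fin.castSucc j)
    simpa [hphi, Fin.snoc_castSucc] using this
  have hrank : Module.finrank F ↥(C.map φ) = 3 := by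
    rw [← h3]
    exact (Submodule.equivMapOfInjective φ hinj C).symm.finrank_eq
  have hwt : ∀ c' ∈ C.map φ, c' ≠ 0 → d + 1 ≤ hamWt c' := by
    rintro c' ⟨c, hc, rfl⟩ hne
    have hcne : c ≠ 0 := by rintro rfl; exact hne (map_zero φ)
    have hdc := hw c hc hcne
    have hsplit : hamWt (φ c) = hamWt c + (if (∑ j, c j) ≠ 0 then 1 else 0) := by
      unfold hamWt
      rw [Finset.card_filter, Finset.card_filter, Fin.sum_univ_castSucc]
      congr 1
      · refine Finset.sum_congr rfl fun j _ => ?_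
        have hcs : φ c (Fin.castSucc j) = c j := by simp [hphi, Fin.snoc_castSucc]
        simp [hcs]
      · have hls : φ c (Fin.last n) = ∑ j, c j := by simp [hphi, Fin.snoc_last]
        simp [hls]
    by_cases hs : (∑ j, c j) = 0
    · have hpar : Even (hamWt c) := by
        by_contra hodd
        apply cast_odd_ne hF hodd
        have hsum : ((hamWt c : ℕ) : F) = ∑ j, c j := by
          unfold hamWt
          rw [← Finset.sum_filter_of_ne (p := fun j : Fin n => c j ≠ 0)
            (f := fun j => c j) (by intro x _ h; exact h)]
          rw [Finset.sum_congr rfl (g := fun _ => (1:F)) (fun j hj => by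
            rcases two_elt hF (c j) with h0 | h1
            · exact absurd h0 (Finset.mem_filter.mp hj).2
            · exact h1)]
          simp
        rw [hsum, hs]
      rw [hsplit, if_neg (not_not_intro hs)]
      obtain ⟨k, hk⟩ := hpar
      rcases Nat.even_or_odd d with hde | hdo
      · exact absurd hde hd
      · obtain ⟨m, hm⟩ := hdo
        omega
    · rw [hsplit, if_pos hs]; omega
  exact lemA hF (C.map φ) hrank hwt

lemma lemC {F : Type} [Field F] {n : ℕ} (C : Submodule F (Fin n → F))
    (h3 : Module.finrank F ↥C = 3)
    (hloc : ∀ i : Fin n, ∃ S : Finset (Fin n), i ∉ S ∧ S.card ≤ 2 ∧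
      ∀ c ∈ C, ∀ c' ∈ C, (∀ j ∈ S, c j = c' j) → c i = c' i) : 5 ≤ n := by
  classical
  by_contra hn
  push_neg at hn
  -- n ≤ 4
  have hle : Module.finrank F ↥C ≤ n := by
    calc Module.finrank F ↥C ≤ Module.finrank F (Fin n → F) := Submodule.finrank_le C
    _ = n := by simp
  rw [h3] at hle
  -- so n = 3 or 4
  have hn34 : n = 3 ∨ n = 4 := by omega
  have hpos : 0 < n := by omega
  set i0 : Fin n := ⟨0, hpos⟩ with hi0
  obtain ⟨S, hiS, hScard, hSloc⟩ := hloc i0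
  -- pad S to card exactly 2 within univ \ {i0}
  have hSsub : S ⊆ Finset.univ.erase i0 := by
    intro j hj
    exact Finset.mem_erase.mpr ⟨fun hh => hiS (hh ▸ hj), Finset.mem_univ _⟩
  have hcu : 2 ≤ (Finset.univ.erase i0).card := by
    rw [Finset.card_erase_of_mem (Finset.mem_univ _), Finset.card_univ, Fintype.card_fin]
    omega
  obtain ⟨S', hSS', hS'sub, hS'card⟩ := Finset.exists_subsuperset_card_eq hSsub hScard hcu
  obtain ⟨j1, j2, hj12, hS'⟩ := Finset.card_eq_two.mp hS'card
  have hj1i : j1 ≠ i0 := by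
    have := hS'sub (by rw [hS']; simp : j1 ∈ S')
    exact (Finset.mem_erase.mp this).1
  have hj2i : j2 ≠ i0 := by
    have := hS'sub (by rw [hS']; simp : j2 ∈ S')
    exact (Finset.mem_erase.mp this).1
  -- kernel of restriction to (j1, j2)
  set L : ↥C →ₗ[F] (F × F) :=
    { toFun := fun c => ((c : Fin n → F) j1, (c : Fin n → F) j2)
      map_add' := by intro a c; simp
      map_smul' := by intro a c; simp } with hL
  have hker : LinearMap.ker L ≠ ⊥ := by
    intro hbot
    have hinjL : Function.Injective L := by
      rw [← LinearMap.ker_eq_bot] at *; exact hbot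
    have := LinearMap.finrank_le_finrank_of_injective hinjL
    rw [h3] at this
    simp at this
  obtain ⟨⟨u, huC⟩, huker, hune⟩ := Submodule.exists_mem_ne_zero_of_ne_bot hker
  have hu1 : u j1 = 0 := by
    have := congrArg Prod.fst (LinearMap.mem_ker.mp huker)
    simpa [hL] using this
  have hu2 : u j2 = 0 := by
    have := congrArg Prod.snd (LinearMap.mem_ker.mp huker)
    simpa [hL] using this
  have hune' : u ≠ 0 := by
    intro hh
    apply hune
    exact Subtype.ext hh
  -- u vanishes on S', hence on S, hence at i0
  have huS' : ∀ j ∈ S', u j = 0 := by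
    intro j hj
    rw [hS'] at hj
    rcases Finset.mem_insert.mp hj with rfl | hj
    · exact hu1
    · rw [Finset.mem_singleton.mp hj]; exact hu2
  have hui0 : u i0 = 0 := by
    have := hSloc u huC 0 (Submodule.zero_mem C) (fun j hj => by
      rw [huS' j (hSS' hj)]; rfl)
    simpa using this
  -- in both cases derive that u is supported outside {i0, j1, j2}
  rcases hn34 with rfl | rfl
  · -- n = 3 : {i0, j1, j2} = univ
    apply hune'
    funext j
    have : ({i0, j1, j2} : Finset (Fin 3)).card = 3 :=
      Finset.card_eq_three.mpr ⟨i0, j1, j2, fun hh => hj1i hh.symm, fun hh => hj2i hh.symm, hj12, rfl⟩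
    have huniv : ({i0, j1, j2} : Finset (Fin 3)) = Finset.univ :=
      Finset.eq_univ_of_card _ (by rw [this]; rfl)
    have hj : j ∈ ({i0, j1, j2} : Finset (Fin 3)) := huniv ▸ Finset.mem_univ j
    rcases Finset.mem_insert.mp hj with rfl | hj
    · exact hui0
    · rcases Finset.mem_insert.mp hj with rfl | hj
      · exact hu1
      · rw [Finset.mem_singleton.mp hj]; exact hu2
  · -- n = 4 : complement of {i0, j1, j2} is a single m
    have hc3 : ({i0, j1, j2} : Finset (Fin 4)).card = 3 :=
      Finset.card_eq_three.mpr ⟨i0, j1, j2, fun hh => hj1i hh.symm, fun hh => hj2i hh.symm, hj12, rfl⟩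
    have hcompl : (Finset.univ \ ({i0, j1, j2} : Finset (Fin 4))).card = 1 := by
      rw [Finset.card_sdiff_of_subset (Finset.subset_univ _), Finset.card_univ, Fintype.card_fin, hc3]
    obtain ⟨m, hm⟩ := Finset.card_eq_one.mp hcompl
    have hmmem : m ∈ Finset.univ \ ({i0, j1, j2} : Finset (Fin 4)) := by rw [hm]; simp
    have hmne : m ∉ ({i0, j1, j2} : Finset (Fin 4)) := (Finset.mem_sdiff.mp hmmem).2
    -- u vanishes off m
    have huoff : ∀ j : Fin 4, j ≠ m → u j = 0 := by
      intro j hj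
      have : j ∈ ({i0, j1, j2} : Finset (Fin 4)) := by
        by_contra hnotin
        have : j ∈ Finset.univ \ ({i0, j1, j2} : Finset (Fin 4)) :=
          Finset.mem_sdiff.mpr ⟨Finset.mem_univ _, hnotin⟩
        rw [hm, Finset.mem_singleton] at this
        exact hj this
      rcases Finset.mem_insert.mp this with rfl | hj'
      · exact hui0
      · rcases Finset.mem_insert.mp hj' with rfl | hj''
        · exact hu1
        · rw [Finset.mem_singleton.mp hj'']; exact hu2
    -- locality at m kills u m
    obtain ⟨Sm, hmSm, _, hSmloc⟩ := hloc m
    have hum : u m = 0 := by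
      have := hSmloc u huC 0 (Submodule.zero_mem C) (fun j hj => by
        rw [huoff j (fun hh => hmSm (hh ▸ hj))]; rfl)
      simpa using this
    apply hune'
    funext j
    by_cases hj : j = m
    · rw [hj]; exact hum
    · exact huoff j hj

lemma gd_lrc {n d : ℕ} {g : Fin n → Fin 3 → ZMod 2} (h : GdGen n d g) :
    LRCExists 2 n 3 d 2 := by
  obtain ⟨F, hf, hcard, C, hic, hl⟩ := gd_bridge h
  exact ⟨F, hf, hcard, C, ⟨hic.1, hic.2⟩, hl⟩

lemma gd_family {n0 d0 : ℕ} {g0 : Fin n0 → Fin 3 → ZMod 2} (h0 : GdGen n0 d0 g0) (t : ℕ) :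
    LRCExists 2 (n0 + 7 * t) 3 (d0 + 4 * t) 2 := by
  suffices h : ∃ n d, n = n0 + 7 * t ∧ d = d0 + 4 * t ∧
      ∃ g : Fin n → Fin 3 → ZMod 2, GdGen n d g by
    obtain ⟨n, d, rfl, rfl, g, hg⟩ := h
    exact gd_lrc hg
  induction t with
  | zero => exact ⟨n0, d0, by omega, by omega, g0, h0⟩
  | succ k ih =>
    obtain ⟨n, d, hn, hd, g, hg⟩ := ih
    exact ⟨n + 7, d + 4, by omega, by omega, _, gd_append hg⟩

lemma lrc_lbA {n d : ℕ} (h : LRCExists 2 n 3 d 2) : 7 * d ≤ 4 * n := by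
  obtain ⟨F, hf, hcard, C, ⟨hrk, hwt⟩, hloc⟩ := h
  exact lemA hcard C hrk hwt

lemma lrc_lbB {n d : ℕ} (hd : ¬ Even d) (h : LRCExists 2 n 3 d 2) : 7 * (d+1) ≤ 4 * (n+1) := by
  obtain ⟨F, hf, hcard, C, ⟨hrk, hwt⟩, hloc⟩ := h
  exact lemB hcard hd C hrk hwt

lemma lrc_lbC {n d : ℕ} (h : LRCExists 2 n 3 d 2) : 5 ≤ n := by
  obtain ⟨F, hf, hcard, C, ⟨hrk, hwt⟩, hloc⟩ := h
  exact lemC C hrk hloc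

lemma nLRC_eq {d v : ℕ} (hmem : LRCExists 2 v 3 d 2)
    (hlb : ∀ n, LRCExists 2 n 3 d 2 → v ≤ n) : nLRC 2 3 d 2 = v :=
  le_antisymm (Nat.sInf_le hmem) (le_csInf ⟨v, hmem⟩ fun n hn => hlb n hn)

theorem n2_k3_r2 :
    (∀ t : ℕ, nLRC 2 3 (3 + 4 * t) 2 = 6 + 7 * t ∧ nLRC 2 3 (4 + 4 * t) 2 = 7 + 7 * t ∧
        nLRC 2 3 (5 + 4 * t) 2 = 10 + 7 * t ∧ nLRC 2 3 (6 + 4 * t) 2 = 11 + 7 * t) ∧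
    nLRC 2 3 1 2 = 5 ∧
    nLRC 2 3 2 2 = 5 := by
  refine ⟨fun t => ⟨?_, ?_, ?_, ?_⟩, ?_, ?_⟩
  · refine nLRC_eq (by simpa using gd_family gd6 t) fun n hn => ?_
    have hodd : ¬ Even (3 + 4 * t) := by simp [Nat.even_iff]; omega
    have := lrc_lbB hodd hn
    omega
  · refine nLRC_eq (by simpa using gd_family gd7 t) fun n hn => ?_
    have := lrc_lbA hn
    omega
  · refine nLRC_eq (by simpa using gd_family gd10 t) fun n hn => ?_
    have hodd : ¬ Even (5 + 4 * t) := by simp [Nat.even_iff]; omega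
    have := lrc_lbB hodd hn
    omega
  · refine nLRC_eq (by simpa using gd_family gd11 t) fun n hn => ?_
    have := lrc_lbA hn
    omega
  · refine nLRC_eq (gd_lrc gd5') fun n hn => lrc_lbC hn
  · refine nLRC_eq (gd_lrc gd5) fun n hn => lrc_lbC hn
end

section
/- For each integer k ≥ 2 one has n_2(k, 2^{k-2}, 2) = 2^{k-1} + 1; that is, the smallest length of a binary linear code of dimension k with minimum Hamming distance at least 2^{k-2} and locality 2 is exactly 2^{k-1} + 1. -/
open scoped Classical

section TwoField
variable {F : Type} [Field F]

lemma two_field_cases (hF : Nat.card F = 2) (x : F) : x = 0 ∨ x = 1 := by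
  have hfin : Finite F := Nat.finite_of_card_ne_zero (by omega)
  have : Fintype F := Fintype.ofFinite F
  have hc : Fintype.card F = 2 := by rw [← Nat.card_eq_fintype_card]; exact hF
  have hu : Fintype.card Fˣ = 1 := by rw [Fintype.card_units, hc]
  rcases eq_or_ne x 0 with h | h
  · exact Or.inl h
  · right
    have hsub : Subsingleton Fˣ := Fintype.card_le_one_iff_subsingleton.mp (by omega)
    have : (Units.mk0 x h) = 1 := hsub.elim _ _
    have := congrArg Units.val this
    simpa using this

lemma two_field_add_self (hF : Nat.card F = 2) (x : F) : x + x = 0 := by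
  rcases two_field_cases hF x with h | h
  · simp [h]
  · subst h
    rcases two_field_cases hF (1 + 1 : F) with h | h
    · exact h
    · exfalso; have : (1 : F) = 0 := by linear_combination h
      simpa using this

end TwoField

section Count
variable {F : Type} [Field F] {M : Type} [AddCommGroup M] [Module F M]

lemma card_module (hF : Nat.card F = 2) [Fintype F] [Fintype M] :
    Fintype.card M = 2 ^ Module.finrank F M := by
  have hc : Fintype.card F = 2 := by rw [← Nat.card_eq_fintype_card]; exact hF
  rw [Module.card_eq_pow_finrank (K := F) (V := M), hc]

lemma finrank_ker (φ : M →ₗ[F] F) (hφ : φ ≠ 0) [FiniteDimensional F M] :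
    Module.finrank F (LinearMap.ker φ) = Module.finrank F M - 1 := by
  have h := LinearMap.finrank_range_add_finrank_ker φ
  have hr : Module.finrank F (LinearMap.range φ) = 1 := by
    have h1 : Module.finrank F (LinearMap.range φ) ≤ 1 := by
      simpa using Submodule.finrank_le (LinearMap.range φ)
    have h2 : 0 < Module.finrank F (LinearMap.range φ) := by
      rw [Module.finrank_pos_iff_exists_ne_zero]
      obtain ⟨x, hx⟩ : ∃ x, φ x ≠ 0 := by
        by_contra h; push_neg at h; exact hφ (by ext x; simp [h])
      exact ⟨⟨φ x, x, rfl⟩, fun h => hx (congrArg Subtype.val h)⟩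
    omega
  omega

lemma card_filter_ker (hF : Nat.card F = 2) [Fintype F] [Fintype M] (φ : M →ₗ[F] F) (hφ : φ ≠ 0) :
    (Finset.univ.filter fun x : M => φ x = 0).card = 2 ^ (Module.finrank F M - 1) := by
  have : (Finset.univ.filter fun x : M => φ x = 0).card = Fintype.card (LinearMap.ker φ) := by
    rw [Fintype.card_subtype]
    congr 1
  rw [this, card_module hF, finrank_ker φ hφ]

lemma card_filter_ne (hF : Nat.card F = 2) [Fintype F] [Fintype M] (φ : M →ₗ[F] F) (hφ : φ ≠ 0) :
    (Finset.univ.filter fun x : M => φ x ≠ 0).card = 2 ^ (Module.finrank F M - 1) := by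
  have hsplit := Finset.card_filter_add_card_filter_not
    (s := (Finset.univ : Finset M)) (p := fun x : M => φ x = 0)
  rw [Finset.card_univ, card_module (M := M) hF] at hsplit
  have hk := card_filter_ker hF φ hφ
  have hm : 1 ≤ Module.finrank F M := by
    by_contra h
    have : Module.finrank F M = 0 := by omega
    have : Subsingleton M := by
      have := Module.finrank_zero_iff (R := F) (M := M)
      exact this.mp ‹_›
    exact hφ (by ext x; rw [Subsingleton.elim x 0]; simp)
  simp only [ne_eq]
  have : (2:ℕ) ^ Module.finrank F M = 2 ^ (Module.finrank F M - 1) + 2 ^ (Module.finrank F M - 1) := by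
    have : Module.finrank F M = (Module.finrank F M - 1) + 1 := by omega
    conv_lhs => rw [this]
    rw [pow_succ]; omega
  omega

section Plotkin
variable {F : Type} [Field F]

lemma plotkin_count (hF : Nat.card F = 2) {n : ℕ}
    (D : Submodule F (Fin n → F)) (d : ℕ)
    (hd : ∀ c ∈ D, c ≠ 0 → d ≤ hamWt c) (Z : Finset (Fin n))
    (hZ : ∀ c ∈ D, ∀ j ∈ Z, c j = 0) :
    d * (2 ^ (Module.finrank F ↥D) - 1) ≤ (n - Z.card) * 2 ^ (Module.finrank F ↥D - 1) := by
  have hfin : Finite F := Nat.finite_of_card_ne_zero (by omega)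
  have : Fintype F := Fintype.ofFinite F
  have : Fintype (Fin n → F) := inferInstance
  have : Fintype D := Fintype.ofFinite D
  set m := Module.finrank F ↥D with hm
  have hcardD : Fintype.card D = 2 ^ m := card_module hF
  -- rewrite total weight as a sum of column counts
  have key : ∑ c : D, hamWt (c : Fin n → F)
      = ∑ i : Fin n, (Finset.univ.filter fun c : D => (c : Fin n → F) i ≠ 0).card := by
    have : ∀ c : D, hamWt (c : Fin n → F)
        = ∑ i : Fin n, if (c : Fin n → F) i ≠ 0 then 1 else 0 := by
      intro c; rw [hamWt, Finset.card_filter]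
    simp_rw [this, Finset.card_filter]
    exact Finset.sum_comm
  -- lower bound
  have hlow : d * (2 ^ m - 1) ≤ ∑ c : D, hamWt (c : Fin n → F) := by
    have h1 : (Finset.univ.filter fun c : D => c ≠ 0).card = 2 ^ m - 1 := by
      rw [Finset.filter_ne', Finset.card_erase_of_mem (Finset.mem_univ _),
        Finset.card_univ, hcardD]
    calc d * (2 ^ m - 1) = ∑ _c ∈ Finset.univ.filter fun c : D => c ≠ 0, d := by
          rw [Finset.sum_const, h1, smul_eq_mul, mul_comm]
      _ ≤ ∑ c ∈ Finset.univ.filter fun c : D => c ≠ 0, hamWt (c : Fin n → F) := by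
          apply Finset.sum_le_sum
          intro c hc
          simp only [Finset.mem_filter] at hc
          exact hd c c.2 (by simpa [Submodule.coe_eq_zero] using hc.2)
      _ ≤ ∑ c : D, hamWt (c : Fin n → F) := Finset.sum_le_sum_of_subset (Finset.filter_subset _ _)
  -- upper bound
  have hcount : ∀ i : Fin n,
      (Finset.univ.filter fun c : D => (c : Fin n → F) i ≠ 0).card ≤ 2 ^ (m - 1) := by
    intro i
    set φ : D →ₗ[F] F := (LinearMap.proj i).comp D.subtype with hφdef
    have hfe : ∀ c : D, (c : Fin n → F) i = φ c := fun c => rfl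
    rcases eq_or_ne φ 0 with h0 | h0
    · have : (Finset.univ.filter fun c : D => (c : Fin n → F) i ≠ 0) = ∅ := by
        apply Finset.filter_eq_empty_iff.mpr
        intro c _
        simp [hfe c, h0]
      simp [this]
    · have := card_filter_ne hF φ h0
      simp_rw [hfe]
      rw [this]
  have hZero : ∀ i ∈ Z,
      (Finset.univ.filter fun c : D => (c : Fin n → F) i ≠ 0).card = 0 := by
    intro i hi
    rw [Finset.card_eq_zero]
    apply Finset.filter_eq_empty_iff.mpr
    intro c _
    simp [hZ c c.2 i hi]
  have hup : ∑ i : Fin n, (Finset.univ.filter fun c : D => (c : Fin n → F) i ≠ 0).card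
      ≤ (n - Z.card) * 2 ^ (m - 1) := by
    have hsub : Z ⊆ Finset.univ := Finset.subset_univ Z
    rw [← Finset.sum_sdiff hsub]
    have h2 : ∑ i ∈ Z, (Finset.univ.filter fun c : D => (c : Fin n → F) i ≠ 0).card = 0 :=
      Finset.sum_eq_zero hZero
    rw [h2, add_zero]
    calc ∑ i ∈ Finset.univ \ Z, (Finset.univ.filter fun c : D => (c : Fin n → F) i ≠ 0).card
        ≤ ∑ _i ∈ Finset.univ \ Z, 2 ^ (m - 1) :=
          Finset.sum_le_sum fun i _ => hcount i
      _ = (n - Z.card) * 2 ^ (m - 1) := by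
          rw [Finset.sum_const, smul_eq_mul, Finset.card_sdiff_of_subset hsub, Finset.card_univ,
            Fintype.card_fin]
  omega
end Plotkin
section Loc
variable {F : Type} [Field F]

lemma locality_dual (hF : Nat.card F = 2) {n : ℕ} (C : Submodule F (Fin n → F)) {i : Fin n}
    (S : Finset (Fin n))
    (hrec : ∀ c ∈ C, ∀ c' ∈ C, (∀ j ∈ S, c j = c' j) → c i = c' i) :
    ∃ T : Finset (Fin n), T ⊆ S ∧ ∀ c ∈ C, c i = ∑ j ∈ T, c j := by
  classical
  set r : C →ₗ[F] ({x // x ∈ S} → F) :=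
    LinearMap.pi (fun j => (LinearMap.proj j.1).comp C.subtype) with hr
  set e : C →ₗ[F] F := (LinearMap.proj i).comp C.subtype with he
  have hker : LinearMap.ker r ≤ LinearMap.ker e := by
    intro c hc
    rw [LinearMap.mem_ker] at hc ⊢
    have hz : ∀ j ∈ S, (c : Fin n → F) j = (0 : Fin n → F) j := by
      intro j hj
      have := congrFun hc ⟨j, hj⟩
      simpa [r] using this
    have := hrec c c.2 0 C.zero_mem (by simpa using hz)
    simpa [e] using this
  obtain ⟨g, hg⟩ := (r.rangeRestrict).exists_rightInverse_of_surjective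
    (LinearMap.range_rangeRestrict r)
  obtain ⟨ψ, hψ⟩ := LinearMap.exists_extend (e.comp g)
  have hfact : ∀ c : C, ψ (r c) = e c := by
    intro c
    have h1 : (LinearMap.range r).subtype (r.rangeRestrict c) = r c := rfl
    have h2 : ψ (r c) = e (g (r.rangeRestrict c)) := by
      rw [← h1, ← LinearMap.comp_apply, hψ]; rfl
    have h3 : g (r.rangeRestrict c) - c ∈ LinearMap.ker r := by
      rw [LinearMap.mem_ker, map_sub]
      have : r.rangeRestrict (g (r.rangeRestrict c)) = r.rangeRestrict c := by
        rw [← LinearMap.comp_apply, hg]; rfl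
      have := congrArg ((LinearMap.range r).subtype) this
      simp only [h1] at this
      rw [show r (g (r.rangeRestrict c)) = r c from this]
      simp
    have h4 : e (g (r.rangeRestrict c) - c) = 0 := hker h3
    rw [map_sub] at h4
    have : e (g (r.rangeRestrict c)) = e c := by
      have := sub_eq_zero.mp h4
      exact this
    rw [h2, this]
  set a : {x // x ∈ S} → F := fun j => ψ (fun j' => if j = j' then 1 else 0) with ha
  set T : Finset (Fin n) :=
    (Finset.univ.filter fun j : {x // x ∈ S} => a j ≠ 0).image Subtype.val with hT
  refine ⟨T, ?_, ?_⟩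
  · intro x hx
    rw [hT] at hx
    obtain ⟨j, _, rfl⟩ := Finset.mem_image.mp hx
    exact j.2
  · intro c hc
    have h1 : (c : Fin n → F) i = ψ (r ⟨c, hc⟩) := (hfact ⟨c, hc⟩).symm
    have h2 : ψ (r ⟨c, hc⟩) = ∑ j : {x // x ∈ S}, c j.1 • a j := by
      rw [LinearMap.pi_apply_eq_sum_univ ψ (r ⟨c, hc⟩)]
      rfl
    have h3 : ∑ j : {x // x ∈ S}, c j.1 • a j
        = ∑ j ∈ Finset.univ.filter (fun j : {x // x ∈ S} => a j ≠ 0), c j.1 • a j := by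
      rw [Finset.sum_filter_of_ne]
      intro j _ hj
      intro haj
      exact hj (by rw [haj, smul_zero])
    have h4 : ∑ j ∈ Finset.univ.filter (fun j : {x // x ∈ S} => a j ≠ 0), c j.1 • a j
        = ∑ j ∈ T, c j := by
      rw [hT, Finset.sum_image (by intro x _ y _ h; exact Subtype.ext h)]
      apply Finset.sum_congr rfl
      intro j hj
      simp only [Finset.mem_filter] at hj
      rcases two_field_cases hF (a j) with h | h
      · exact absurd h hj.2
      · rw [h, smul_eq_mul, mul_one]
    rw [h1, h2, h3, h4]
end Loc
lemma arith_contra (k t n m : ℕ) (hk : 2 ≤ k) (ht : t ≤ 2) (htn : t + 1 ≤ n)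
    (hn : n ≤ 2 ^ (k - 1)) (hm : k - t ≤ m) (hm1 : 1 ≤ m)
    (H : 2 ^ (k - 2) * (2 ^ m - 1) ≤ (n - (t + 1)) * 2 ^ (m - 1)) : False := by
  obtain ⟨k', rfl⟩ : ∃ k', k = k' + 2 := ⟨k - 2, by omega⟩
  obtain ⟨m', rfl⟩ : ∃ m', m = m' + 1 := ⟨m - 1, by omega⟩
  simp only [Nat.add_sub_cancel] at H hn hm
  set A := 2 ^ k' with hA
  set B := 2 ^ m' with hB
  have hA1 : 1 ≤ A := Nat.one_le_two_pow
  have hB1 : 1 ≤ B := Nat.one_le_two_pow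
  have hmB : 2 ^ (m' + 1) = 2 * B := by rw [pow_succ, mul_comm]
  have hkA : 2 ^ (k' + 1) = 2 * A := by rw [pow_succ, mul_comm]
  rw [hmB] at H
  have hn2 : n ≤ 2 * A := by rw [show k' + 2 - 1 = k' + 1 from rfl, hkA] at hn; exact hn
  have f1 : 2 ^ (k' + 2 - 2) = A := by norm_num [hA]
  have h2B : 1 ≤ 2 * B := by omega
  have e1 : A * (2 * B - 1) + A = 2 * (A * B) := by
    calc A * (2 * B - 1) + A = A * ((2 * B - 1) + 1) := by ring
      _ = A * (2 * B) := by rw [Nat.sub_add_cancel h2B]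
      _ = 2 * (A * B) := by ring
  have f2 : (n - (t + 1)) * B ≤ (2 * A - (t + 1)) * B :=
    Nat.mul_le_mul_right _ (by omega)
  have f3 : (2 * A - (t + 1)) * B + (t + 1) * B = 2 * (A * B) := by
    rw [← Nat.add_mul, Nat.sub_add_cancel (by omega)]
    ring
  interval_cases t
  · have hp : 2 * A ≤ B := by
      have := Nat.pow_le_pow_right (show 1 ≤ 2 by norm_num) (show k' + 1 ≤ m' by omega)
      rwa [hkA] at this
    omega
  · have hp : A ≤ B := Nat.pow_le_pow_right (by norm_num) (by omega)
    omega
  · have hp : A ≤ 2 * B := by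
      have := Nat.pow_le_pow_right (show 1 ≤ 2 by norm_num) (show k' ≤ m' + 1 by omega)
      rwa [hmB] at this
    omega

lemma lower_bound (k n : ℕ) (hk : 2 ≤ k) (h : LRCExists 2 n k (2 ^ (k - 2)) 2) :
    2 ^ (k - 1) + 1 ≤ n := by
  by_contra hcon
  push_neg at hcon
  have hn : n ≤ 2 ^ (k - 1) := by omega
  obtain ⟨F, _, hF, C, ⟨hrank, hwt⟩, hloc⟩ := h
  have hkn : k ≤ n := by
    rw [← hrank]
    calc Module.finrank F ↥C ≤ Module.finrank F (Fin n → F) := Submodule.finrank_le C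
      _ = n := by rw [Module.finrank_pi, Fintype.card_fin]
  have hn1 : 0 < n := by omega
  set i : Fin n := ⟨0, hn1⟩ with hi
  obtain ⟨S, hiS, hScard, hrec⟩ := hloc i
  obtain ⟨T, hTS, hTsum⟩ := locality_dual hF C S hrec
  have hiT : i ∉ T := fun hmem => hiS (hTS hmem)
  have hTcard : T.card ≤ 2 := le_trans (Finset.card_le_card hTS) hScard
  have hTn : T.card + 1 ≤ n := by
    have hsub : insert i T ⊆ Finset.univ := Finset.subset_univ _
    have hc := Finset.card_le_card hsub
    rw [Finset.card_insert_of_notMem hiT, Finset.card_univ, Fintype.card_fin] at hc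
    exact hc
  classical
  set g : C →ₗ[F] ({x // x ∈ T} → F) :=
    LinearMap.pi (fun j => (LinearMap.proj j.1).comp C.subtype) with hg
  set D : Submodule F (Fin n → F) := Submodule.map C.subtype (LinearMap.ker g) with hD
  have hDC : D ≤ C := Submodule.map_subtype_le C (LinearMap.ker g)
  have hDT : ∀ c ∈ D, ∀ j ∈ T, c j = 0 := by
    intro c hc j hj
    obtain ⟨x, hx, rfl⟩ := hc
    have hx' : g x = 0 := hx
    have := congrFun hx' ⟨j, hj⟩
    simpa [hg] using this
  have hZ : ∀ c ∈ D, ∀ j ∈ insert i T, c j = 0 := by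
    intro c hc j hj
    rcases Finset.mem_insert.mp hj with rfl | hj'
    · rw [hTsum c (hDC hc)]
      exact Finset.sum_eq_zero (hDT c hc)
    · exact hDT c hc j hj'
  set m := Module.finrank F ↥D with hm
  have hmk : k - T.card ≤ m := by
    have h1 : m = Module.finrank F ↥(LinearMap.ker g) :=
      (Submodule.finrank_map_subtype_eq C (LinearMap.ker g))
    have h2 := LinearMap.finrank_range_add_finrank_ker g
    have h3 : Module.finrank F ↥(LinearMap.range g) ≤ T.card := by
      calc Module.finrank F ↥(LinearMap.range g)
          ≤ Module.finrank F ({x // x ∈ T} → F) := Submodule.finrank_le _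
        _ = T.card := by rw [Module.finrank_pi, Fintype.card_coe]
    rw [hrank] at h2
    omega
  have hm1 : 1 ≤ m := by
    rcases Nat.lt_or_ge k 3 with h3 | h3
    · have hk2 : k = 2 := by omega
      have : n ≤ 2 := by rw [hk2] at hn; simpa using hn
      omega
    · omega
  have hplot := plotkin_count hF D (2 ^ (k - 2))
    (fun c hc hne => hwt c (hDC hc) hne) (insert i T) hZ
  rw [Finset.card_insert_of_notMem hiT] at hplot
  exact arith_contra k T.card n m hk hTcard hTn hn hmk hm1 hplot

lemma locality_of_rel {F : Type} [Field F] {n : ℕ} (C : Submodule F (Fin n → F))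
    (h : ∀ i : Fin n, ∃ j1 j2 : Fin n, j1 ≠ i ∧ j2 ≠ i ∧ ∀ c ∈ C, c i = c j1 + c j2) :
    HasLocality C 2 := by
  intro i
  obtain ⟨j1, j2, h1, h2, hrel⟩ := h i
  refine ⟨{j1, j2}, ?_, ?_, ?_⟩
  · intro hmem
    rcases Finset.mem_insert.mp hmem with heq | hmem
    · exact h1 heq.symm
    · exact h2 (Finset.mem_singleton.mp hmem).symm
  · exact le_trans (Finset.card_insert_le _ _) (by simp)
  · intro c hc c' hc' hagree
    rw [hrel c hc, hrel c' hc',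
      hagree j1 (Finset.mem_insert_self _ _),
      hagree j2 (Finset.mem_insert_of_mem (Finset.mem_singleton_self _))]

lemma exists_code (k : ℕ) (hk : 2 ≤ k) : LRCExists 2 (2 ^ (k - 1) + 1) k (2 ^ (k - 2)) 2 := by
  classical
  obtain ⟨m, rfl⟩ : ∃ m, k = m + 1 := ⟨k - 1, by omega⟩
  have hm1 : 1 ≤ m := by omega
  have hFcard : Nat.card (ZMod 2) = 2 := Nat.card_zmod 2
  have hsingle : ∀ (t : Fin m) (w : Fin m → ZMod 2),
      ∑ t', (Pi.single t 1 : Fin m → ZMod 2) t' * w t' = w t := by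
    intro t w
    rw [Finset.sum_eq_single t]
    · rw [Pi.single_eq_same, one_mul]
    · intro b _ hb
      rw [Pi.single_eq_of_ne hb, zero_mul]
    · intro hb
      exact absurd (Finset.mem_univ t) hb
  have hcardW : Fintype.card (Fin m → ZMod 2) = 2 ^ m := by
    rw [Fintype.card_fun, ZMod.card, Fintype.card_fin]
  have hcards : Fintype.card (Fin (2 ^ (m + 1 - 1) + 1))
      = Fintype.card (Option (Fin m → ZMod 2)) := by
    rw [Fintype.card_fin, Fintype.card_option, hcardW]
    simp
  set e : Fin (2 ^ (m + 1 - 1) + 1) ≃ Option (Fin m → ZMod 2) :=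
    Fintype.equivOfCardEq hcards with he
  set i0 : Fin m := ⟨0, hm1⟩ with hi0
  set h0 : (ZMod 2 × (Fin m → ZMod 2)) →ₗ[ZMod 2] ZMod 2 :=
    (LinearMap.proj i0).comp (LinearMap.snd (ZMod 2) (ZMod 2) (Fin m → ZMod 2)) with hh0
  set h1 : (Fin m → ZMod 2) → ((ZMod 2 × (Fin m → ZMod 2)) →ₗ[ZMod 2] ZMod 2) := fun a =>
    LinearMap.fst (ZMod 2) (ZMod 2) (Fin m → ZMod 2) +
      ((∑ t, a t • LinearMap.proj t).comp
        (LinearMap.snd (ZMod 2) (ZMod 2) (Fin m → ZMod 2))) with hh1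
  set G : (ZMod 2 × (Fin m → ZMod 2)) →ₗ[ZMod 2] (Fin (2 ^ (m + 1 - 1) + 1) → ZMod 2) :=
    LinearMap.pi (fun j => Option.elim (e j) h0 h1) with hG
  have hGe : ∀ (p : ZMod 2 × (Fin m → ZMod 2)) j, G p j = Option.elim (e j) (p.2 i0)
      (fun a => p.1 + ∑ t, a t * p.2 t) := by
    intro p j
    rw [hG, LinearMap.pi_apply]
    cases hej : e j with
    | none => simp [hh0]
    | some a =>
      simp [hh1, LinearMap.sum_apply, LinearMap.smul_apply, smul_eq_mul, mul_comm]
  have hGs : ∀ (p : ZMod 2 × (Fin m → ZMod 2)) (a : Fin m → ZMod 2),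
      G p (e.symm (some a)) = p.1 + ∑ t, a t * p.2 t := by
    intro p a
    rw [hGe, Equiv.apply_symm_apply]
    rfl
  have hGn : ∀ (p : ZMod 2 × (Fin m → ZMod 2)), G p (e.symm none) = p.2 i0 := by
    intro p
    rw [hGe, Equiv.apply_symm_apply]
    rfl
  have hinj : Function.Injective G := by
    rw [← LinearMap.ker_eq_bot, LinearMap.ker_eq_bot']
    intro p hp
    have hz : ∀ a : Fin m → ZMod 2, p.1 + ∑ t, a t * p.2 t = 0 := by
      intro a
      rw [← hGs p a, hp]
      rfl
    have hp1 : p.1 = 0 := by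
      have := hz 0
      simpa using this
    have hp2 : p.2 = 0 := by
      funext t
      have := hz (Pi.single t 1)
      rw [hp1, zero_add, hsingle t p.2] at this
      simpa using this
    exact Prod.ext hp1 hp2
  refine ⟨ZMod 2, inferInstance, hFcard, LinearMap.range G, ⟨?_, ?_⟩, ?_⟩
  · rw [LinearMap.finrank_range_of_inj hinj]
    rw [Module.finrank_prod, Module.finrank_self, Module.finrank_pi, Fintype.card_fin]
    omega
  · rintro c ⟨p, rfl⟩ hne
    have hpne : p ≠ 0 := by rintro rfl; exact hne (map_zero G)
    have hsub : (Finset.univ.filter fun a : Fin m → ZMod 2 => p.1 + ∑ t, a t * p.2 t ≠ 0).card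
        ≤ hamWt (G p) := by
      rw [hamWt]
      apply Finset.card_le_card_of_injOn (fun a => e.symm (some a))
      · intro a ha
        simp only [Finset.coe_filter, Set.mem_setOf_eq, Finset.mem_univ, true_and] at ha ⊢
        rw [hGs]
        exact ha
      · intro a _ b _ hab
        have := congrArg e hab
        rw [Equiv.apply_symm_apply, Equiv.apply_symm_apply] at this
        exact Option.some.inj this
    have hcount : 2 ^ (m + 1 - 2) ≤
        (Finset.univ.filter fun a : Fin m → ZMod 2 => p.1 + ∑ t, a t * p.2 t ≠ 0).card := by
      rcases eq_or_ne p.2 0 with h2 | h2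
      · have hp1 : p.1 ≠ 0 := by
          intro hp1'
          exact hpne (Prod.ext hp1' h2)
        have hall : (Finset.univ.filter fun a : Fin m → ZMod 2 =>
            p.1 + ∑ t, a t * p.2 t ≠ 0) = Finset.univ := by
          apply Finset.filter_true_of_mem
          intro a _
          simp only [h2, Pi.zero_apply, mul_zero, Finset.sum_const_zero, add_zero]
          exact hp1
        rw [hall, Finset.card_univ, hcardW]
        apply Nat.pow_le_pow_right (by norm_num)
        exact le_trans (Nat.le_of_eq (Nat.succ_sub_succ m 1)) (Nat.sub_le m 1)
      · set ψ : (Fin m → ZMod 2) →ₗ[ZMod 2] ZMod 2 := ∑ t, p.2 t • LinearMap.proj t with hψ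
        have hψa : ∀ a : Fin m → ZMod 2, ψ a = ∑ t, a t * p.2 t := by
          intro a
          rw [hψ]
          simp only [LinearMap.sum_apply, LinearMap.smul_apply, LinearMap.proj_apply,
            smul_eq_mul]
          exact Finset.sum_congr rfl fun t _ => mul_comm _ _
        have hψne : ψ ≠ 0 := by
          obtain ⟨t0, ht0⟩ : ∃ t0, p.2 t0 ≠ 0 := by
            by_contra hcon; push_neg at hcon
            exact h2 (funext hcon)
          intro hcon
          apply ht0
          have := DFunLike.congr_fun hcon (Pi.single t0 1)
          rw [hψa, hsingle t0 p.2] at this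
          simpa using this
        have hrkW : Module.finrank (ZMod 2) (Fin m → ZMod 2) = m := by
          rw [Module.finrank_pi, Fintype.card_fin]
        have hmm : m + 1 - 2 = Module.finrank (ZMod 2) (Fin m → ZMod 2) - 1 := by
          rw [hrkW]; exact Nat.succ_sub_succ m 1
        rw [hmm]
        clear hmm
        rcases two_field_cases hFcard p.1 with hp1 | hp1
        · rw [← card_filter_ne hFcard ψ hψne]
          apply le_of_eq
          congr 1
          ext a
          simp only [Finset.mem_filter, Finset.mem_univ, true_and, hp1, zero_add, hψa]
        · rw [← card_filter_ker hFcard ψ hψne]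
          apply le_of_eq
          congr 1
          ext a
          simp only [Finset.mem_filter, Finset.mem_univ, true_and, hp1]
          constructor
          · intro h0a
            rw [← hψa, h0a]
            decide
          · intro hne2
            rcases two_field_cases hFcard (ψ a) with hv | hv
            · exact hv
            · exfalso
              apply hne2
              rw [← hψa, hv]
              decide
    exact le_trans hcount hsub
  · apply locality_of_rel
    intro j
    cases hej : e j with
    | some a =>
      refine ⟨e.symm (some (a + Pi.single i0 1)), e.symm none, ?_, ?_, ?_⟩
      · intro heq
        have h' := congrArg e heq
        rw [Equiv.apply_symm_apply, hej] at h'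
        have h2 := congrFun (Option.some.inj h') i0
        rw [Pi.add_apply, Pi.single_eq_same] at h2
        exact one_ne_zero (α := ZMod 2) (by linear_combination h2)
      · intro heq
        have h' := congrArg e heq
        rw [Equiv.apply_symm_apply, hej] at h'
        exact nomatch h'
      · rintro c ⟨p, rfl⟩
        have hj : G p j = p.1 + ∑ t, a t * p.2 t := by rw [hGe, hej]; rfl
        have hkey : ∑ t, (a + Pi.single i0 1 : Fin m → ZMod 2) t * p.2 t
            = (∑ t, a t * p.2 t) + p.2 i0 := by
          calc ∑ t, (a + Pi.single i0 1 : Fin m → ZMod 2) t * p.2 t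
              = ∑ t, (a t * p.2 t + (Pi.single i0 1 : Fin m → ZMod 2) t * p.2 t) := by
                apply Finset.sum_congr rfl
                intro t _
                rw [Pi.add_apply, add_mul]
            _ = (∑ t, a t * p.2 t) + ∑ t, (Pi.single i0 1 : Fin m → ZMod 2) t * p.2 t :=
                Finset.sum_add_distrib
            _ = (∑ t, a t * p.2 t) + p.2 i0 := by
                rw [hsingle i0 p.2]
        have hj1 : G p (e.symm (some (a + Pi.single i0 1)))
            = p.1 + ((∑ t, a t * p.2 t) + p.2 i0) := by
          rw [hGs, hkey]
        have hj2 : G p (e.symm none) = p.2 i0 := hGn p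
        have hc2 : ∀ x y : ZMod 2, x = x + y + y := by decide
        rw [hj, hj1, hj2, ← add_assoc]
        exact hc2 _ _
    | none =>
      refine ⟨e.symm (some 0), e.symm (some (Pi.single i0 1)), ?_, ?_, ?_⟩
      · intro heq
        have h' := congrArg e heq
        rw [Equiv.apply_symm_apply, hej] at h'
        exact nomatch h'
      · intro heq
        have h' := congrArg e heq
        rw [Equiv.apply_symm_apply, hej] at h'
        exact nomatch h'
      · rintro c ⟨p, rfl⟩
        have hj : G p j = p.2 i0 := by rw [hGe, hej]; rfl
        have hj1 : G p (e.symm (some 0)) = p.1 := by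
          rw [hGs]
          simp
        have hj2 : G p (e.symm (some (Pi.single i0 1))) = p.1 + p.2 i0 := by
          rw [hGs, hsingle i0 p.2]
        have hc3 : ∀ x y : ZMod 2, y = x + (x + y) := by decide
        rw [hj, hj1, hj2]
        exact hc3 _ _

theorem n2_reed_muller_r2 (k : ℕ) (hk : 2 ≤ k) :
    nLRC 2 k (2 ^ (k - 2)) 2 = 2 ^ (k - 1) + 1 := by
  have hmem : (2 ^ (k - 1) + 1) ∈ {n | LRCExists 2 n k (2 ^ (k - 2)) 2} :=
    exists_code k hk
  rw [nLRC]
  apply le_antisymm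
  · exact Nat.sInf_le hmem
  · apply le_csInf ⟨_, hmem⟩
    intro n hn
    exact lower_bound k n hk hn
end Count
end
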